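/- arXiv:0906.3849 — 15 statements merged into one kernel-verified Lean document; each statement's English description precedes it below -/
import Mathlib

section
/- Let W be an m×n row-stochastic matrix, r a nonnegative 1×m row vector and f a nonnegative 1×n row vector with r_+ := Σ_i r_i < 1, such that the matrix W̃ := (1+f_+)·(I_m − 1_m r)·W/(1−r_+) − 1_m f is entrywise nonnegative, where f_+ := Σ_j f_j and 1_m is the m×1 all-ones vector. Set c_i := H(W̃_i) − ((1+f_+)/(1−r_+))·H(W_i), where W̃_i and W_i denote the i-th rows of W̃ and W. Then for every p in the probability simplex Ω, setting p̃ := (1−r_+)·p + r, one has I(p|W,0,0) = (I(p̃|W̃,f,c) + H(f))/(1+f_+) + log(1+f_+) + (Σ_i r_i H(W_i))/(1−r_+). -/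
open Finset

/-- Entropy of a (not necessarily normalized) nonnegative vector, natural log,
with the convention `0 * log 0 = 0` (automatic since `Real.log 0 = 0`). -/
noncomputable def Hent {k : ℕ} (q : Fin k → ℝ) : ℝ := -∑ j, q j * Real.log (q j)

/-- `I(p|V,f,c) = H(pV + f) + ∑ i p_i (c_i − H(V_i)) − H(f)`. -/
noncomputable def Ifun {m n : ℕ} (V : Matrix (Fin m) (Fin n) ℝ)
    (f : Fin n → ℝ) (c : Fin m → ℝ) (p : Fin m → ℝ) : ℝ :=
  Hent (fun j => (∑ i, p i * V i j) + f j)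
    + ∑ i, p i * (c i - Hent (fun j => V i j)) - Hent f

lemma Hent_smul {k : ℕ} (t : ℝ) (ht : 0 < t) (q : Fin k → ℝ) (hq : ∀ j, 0 ≤ q j) :
    Hent (fun j => t * q j) = t * Hent q - t * Real.log t * ∑ j, q j := by
  unfold Hent
  have h : ∀ j, t * q j * Real.log (t * q j)
      = t * (q j * Real.log (q j)) + t * Real.log t * q j := by
    intro j
    rcases eq_or_lt_of_le (hq j) with h0 | h0
    · simp [← h0]
    · rw [Real.log_mul ht.ne' h0.ne']; ring
  simp only [h, Finset.sum_add_distrib, ← Finset.mul_sum]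
  ring

/-- Proposition 1: the squeezing reparameterization identity
`I(p|W,0,0) = (I(p̃|W̃,f,c) + H(f))/(1+f₊) + log(1+f₊) + (∑ᵢ rᵢ H(Wᵢ))/(1−r₊)`
where `p̃ = (1−r₊)p + r`. -/
theorem squeezing_identity {m n : ℕ} (W : Matrix (Fin m) (Fin n) ℝ)
    (hW0 : ∀ i j, 0 ≤ W i j) (hW1 : ∀ i, ∑ j, W i j = 1)
    (r : Fin m → ℝ) (hr0 : ∀ i, 0 ≤ r i) (hr1 : ∑ i, r i < 1)
    (f : Fin n → ℝ) (hf0 : ∀ j, 0 ≤ f j)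
    (Wt : Matrix (Fin m) (Fin n) ℝ)
    (hWt : ∀ i j, Wt i j =
      (1 + ∑ j', f j') / (1 - ∑ i', r i') * (W i j - ∑ k, r k * W k j) - f j)
    (hWtpos : ∀ i j, 0 ≤ Wt i j)
    (c : Fin m → ℝ)
    (hc : ∀ i, c i = Hent (fun j => Wt i j)
      - (1 + ∑ j', f j') / (1 - ∑ i', r i') * Hent (fun j => W i j))
    (p : Fin m → ℝ) (hp0 : ∀ i, 0 ≤ p i) (hp1 : ∑ i, p i = 1) :
    Ifun W 0 0 p =
      (Ifun Wt f c (fun i => (1 - ∑ i', r i') * p i + r i) + Hent f) / (1 + ∑ j', f j')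
        + Real.log (1 + ∑ j', f j')
        + (∑ i, r i * Hent (fun j => W i j)) / (1 - ∑ i', r i') := by
  set S := ∑ i', r i' with hS
  set F := ∑ j', f j' with hF
  have hs : (0:ℝ) < 1 - S := by linarith
  have hF0 : 0 ≤ F := Finset.sum_nonneg fun j _ => hf0 j
  have ht : (0:ℝ) < 1 + F := by linarith
  set Q : Fin n → ℝ := fun j => ∑ i, p i * W i j with hQ
  have hQ0 : ∀ j, 0 ≤ Q j := fun j =>
    Finset.sum_nonneg fun i _ => mul_nonneg (hp0 i) (hW0 i j)
  have hQsum : ∑ j, Q j = 1 := by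
    rw [hQ, Finset.sum_comm]
    simp only [← Finset.mul_sum, hW1, mul_one, hp1]
  -- key computation: (p̃ Wt + f)_j = (1+F) Q_j
  have hA : ∀ j, (∑ i, ((1 - S) * p i + r i) * Wt i j) + f j = (1 + F) * Q j := by
    intro j
    have expand : ∀ i ∈ Finset.univ, ((1 - S) * p i + r i) * Wt i j =
        (1 + F) / (1 - S) * ((1 - S) * (p i * W i j))
        + (1 + F) / (1 - S) * (r i * W i j)
        - ((∑ k, r k * W k j) * ((1 + F) / (1 - S)) + f j) * ((1 - S) * p i + r i) := by
      intro i _; rw [hWt i j]; ring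
    rw [Finset.sum_congr rfl expand]
    rw [Finset.sum_sub_distrib, Finset.sum_add_distrib, ← Finset.mul_sum,
      ← Finset.mul_sum, ← Finset.mul_sum, ← Finset.mul_sum]
    have hsum1 : ∑ i, ((1 - S) * p i + r i) = 1 := by
      rw [Finset.sum_add_distrib, ← Finset.mul_sum, hp1, ← hS]; ring
    rw [hsum1, mul_one]
    field_simp
    ring
  have hHA : (fun j => (∑ i, ((1 - S) * p i + r i) * Wt i j) + f j)
      = fun j => (1 + F) * Q j := funext hA
  have hHentQ : Hent (fun j => (1 + F) * Q j)
      = (1 + F) * Hent Q - (1 + F) * Real.log (1 + F) := by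
    rw [Hent_smul (1 + F) ht Q hQ0, hQsum, mul_one]
  have hcH : ∀ i, c i - Hent (fun j => Wt i j)
      = -((1 + F) / (1 - S)) * Hent (fun j => W i j) := by
    intro i; rw [hc i]; ring
  have hsum2 : ∑ i, ((1 - S) * p i + r i) * Hent (fun j => W i j)
      = (1 - S) * (∑ i, p i * Hent (fun j => W i j))
        + ∑ i, r i * Hent (fun j => W i j) := by
    simp only [add_mul, Finset.sum_add_distrib, mul_assoc, ← Finset.mul_sum]
  unfold Ifun
  rw [hHA, hHentQ]
  have hmid : ∑ i, ((1 - S) * p i + r i) * (c i - Hent (fun j => Wt i j))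
      = -((1 + F) / (1 - S)) *
        ((1 - S) * (∑ i, p i * Hent (fun j => W i j))
          + ∑ i, r i * Hent (fun j => W i j)) := by
    simp only [hcH]
    rw [← hsum2, Finset.mul_sum]
    exact Finset.sum_congr rfl fun i _ => by ring
  rw [hmid]
  have hHent0 : Hent (0 : Fin n → ℝ) = 0 := by simp [Hent]
  simp only [Pi.zero_apply, add_zero, zero_sub, hHent0, sub_zero, ← hQ]
  field_simp
  simp only [Finset.sum_neg_distrib]
  ring
end

section
/- Let W be an m×n row-stochastic matrix, r a nonnegative 1×m row vector and f a nonnegative 1×n row vector with r_+ := Σ_i r_i < 1 and f_+ := Σ_j f_j, and set W̃ := (1+f_+)·(I_m − 1_m r)·W/(1−r_+) − 1_m f, where 1_m is the m×1 all-ones vector. Then for every p in the probability simplex Ω, setting p̃ := (1−r_+)·p + r, one has the identity of 1×n vectors p̃·W̃ + f = (1+f_+)·(p·W). -/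
open Finset

/-- The key identity `p̃·W̃ + f = (1+f₊)·(p·W)` (as 1×n vectors), where
`W̃ = (1+f₊)(I − 1ₘ r)W/(1−r₊) − 1ₘ f` and `p̃ = (1−r₊)p + r`. -/
theorem squeezed_row_identity {m n : ℕ} (W : Matrix (Fin m) (Fin n) ℝ)
    (hW0 : ∀ i j, 0 ≤ W i j) (hW1 : ∀ i, ∑ j, W i j = 1)
    (r : Fin m → ℝ) (hr0 : ∀ i, 0 ≤ r i) (hr1 : ∑ i, r i < 1)
    (f : Fin n → ℝ) (hf0 : ∀ j, 0 ≤ f j)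
    (Wt : Matrix (Fin m) (Fin n) ℝ)
    (hWt : ∀ i j, Wt i j =
      (1 + ∑ j', f j') / (1 - ∑ i', r i') * (W i j - ∑ k, r k * W k j) - f j)
    (p : Fin m → ℝ) (hp0 : ∀ i, 0 ≤ p i) (hp1 : ∑ i, p i = 1) :
    ∀ j, (∑ i, ((1 - ∑ i', r i') * p i + r i) * Wt i j) + f j
      = (1 + ∑ j', f j') * ∑ i, p i * W i j := by
  intro j
  set a : ℝ := 1 - ∑ i', r i' with ha_def
  set c : ℝ := 1 + ∑ j', f j' with hc_def
  have ha : a ≠ 0 := by simp only [ha_def]; intro h; linarith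
  set S : ℝ := ∑ k, r k * W k j with hS_def
  have key : ∀ i, ((a * p i + r i) * Wt i j)
      = c / a * ((a * p i + r i) * (W i j - S)) - (a * p i + r i) * f j := by
    intro i
    rw [hWt i j]
    ring
  rw [Finset.sum_congr rfl (fun i _ => key i), Finset.sum_sub_distrib,
    ← Finset.mul_sum, ← Finset.sum_mul]
  have h1 : ∑ i, (a * p i + r i) = 1 := by
    rw [Finset.sum_add_distrib, ← Finset.mul_sum, hp1]
    simp [ha_def]
  have h2 : ∑ i, (a * p i + r i) * (W i j - S) = a * ∑ i, p i * W i j := by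
    have : ∀ i, (a * p i + r i) * (W i j - S)
        = a * (p i * W i j) + r i * W i j - (a * p i + r i) * S := by
      intro i; ring
    rw [Finset.sum_congr rfl (fun i _ => this i), Finset.sum_sub_distrib,
      Finset.sum_add_distrib, ← Finset.mul_sum, ← Finset.sum_mul, h1, ← hS_def]
    ring
  rw [h1, h2, one_mul]
  field_simp
  ring
end

section
/- Let V be an m×n row-stochastic matrix, f a nonnegative 1×n vector, c ∈ ℝ^m, and p ∈ Ω such that f_j + (pV)_j > 0 for every j. Let Φ = (Φ_{ji}), j = 1,…,n, i = 0,1,…,m, be any n×(m+1) matrix with strictly positive entries satisfying Σ_{i=0}^m Φ_{ji} = 1 for each j, and define I(p,Φ) := Σ_{i=1}^m Σ_{j=1}^n p_i V_{ij} log(Φ_{ji}/p_i) + Σ_{j=1}^n f_j log Φ_{j0} + Σ_{i=1}^m c_i p_i, with the convention that any term with coefficient p_i V_{ij} = 0 or f_j = 0 is 0. Then I(p,Φ) ≤ I(p|V,f,c). Moreover, for the choice Φ*_{ji} = p_i V_{ij}/(f_j + (pV)_j) for i ≥ 1 and Φ*_{j0} = f_j/(f_j + (pV)_j), one has I(p,Φ*)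 = I(p|V,f,c) (with the same zero conventions). -/
open Finset

/-- `I(p,Φ) = ∑_{i,j} p_i V_{ij} log(Φ_{ji}/p_i) + ∑_j f_j log Φ_{j0} + ∑_i c_i p_i`;
terms with zero coefficient vanish automatically. -/
noncomputable def IPhi {m n : ℕ} (V : Matrix (Fin m) (Fin n) ℝ)
    (f : Fin n → ℝ) (c : Fin m → ℝ) (p : Fin m → ℝ)
    (Φ : Fin n → Fin m → ℝ) (Φ0 : Fin n → ℝ) : ℝ :=
  (∑ i, ∑ j, p i * V i j * Real.log (Φ j i / p i))
    + ∑ j, f j * Real.log (Φ0 j) + ∑ i, c i * p i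

lemma gibbs_term {a b q t : ℝ} (ha : 0 ≤ a) (hb : 0 < b) (hq : 0 < q)
    (ht : 0 < a → 0 < t) :
    a * Real.log (b / t) ≤ a * Real.log (a / q / t) + (q * b - a) := by
  rcases ha.eq_or_lt with h | h
  · rw [← h]; simp; positivity
  · have ht' := ht h
    have key : a * Real.log (b / t) - a * Real.log (a / q / t)
        = a * Real.log (b * q / a) := by
      rw [← mul_sub, ← Real.log_div (by positivity) (by positivity)]
      congr 2
      field_simp
    have hlog : Real.log (b * q / a) ≤ b * q / a - 1 :=
      Real.log_le_sub_one_of_pos (by positivity)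
    have h2 : a * Real.log (b * q / a) ≤ a * (b * q / a - 1) :=
      mul_le_mul_of_nonneg_left hlog h.le
    have h3 : a * (b * q / a - 1) = q * b - a := by field_simp
    linarith [key ▸ h2, h3 ▸ h2]

lemma star_term {pi v q : ℝ} (hpi : 0 ≤ pi) (hv : 0 ≤ v) (hq : 0 < q) :
    pi * v * Real.log (pi * v / q / pi)
      = pi * (v * Real.log v) - pi * v * Real.log q := by
  rcases hpi.eq_or_lt with h | h
  · rw [← h]; simp
  rcases hv.eq_or_lt with h2 | h2
  · rw [← h2]; simp
  have he : pi * v / q / pi = v / q := by field_simp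
  rw [he, Real.log_div h2.ne' hq.ne']
  ring

/-- For fixed `p`, `I(p,Φ) ≤ I(p|V,f,c)` for every stochastic `Φ` with positive
entries, with equality at `Φ*_{ji} = p_i V_{ij}/(f_j + (pV)_j)`,
`Φ*_{j0} = f_j/(f_j + (pV)_j)`. -/
theorem IPhi_le_Ifun_and_eq {m n : ℕ} (V : Matrix (Fin m) (Fin n) ℝ)
    (hV0 : ∀ i j, 0 ≤ V i j) (hV1 : ∀ i, ∑ j, V i j = 1)
    (f : Fin n → ℝ) (hf0 : ∀ j, 0 ≤ f j) (c : Fin m → ℝ)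
    (p : Fin m → ℝ) (hp0 : ∀ i, 0 ≤ p i) (hp1 : ∑ i, p i = 1)
    (hden : ∀ j, 0 < f j + ∑ i, p i * V i j) :
    (∀ (Φ : Fin n → Fin m → ℝ) (Φ0 : Fin n → ℝ),
      (∀ j i, 0 < Φ j i) → (∀ j, 0 < Φ0 j) → (∀ j, Φ0 j + ∑ i, Φ j i = 1) →
      IPhi V f c p Φ Φ0 ≤ Ifun V f c p)
    ∧ IPhi V f c p
        (fun j i => p i * V i j / (f j + ∑ l, p l * V l j))
        (fun j => f j / (f j + ∑ l, p l * V l j))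
      = Ifun V f c p := by
  set q : Fin n → ℝ := fun j => f j + ∑ i, p i * V i j with hqdef
  -- equality part first
  have heq : IPhi V f c p
        (fun j i => p i * V i j / (f j + ∑ l, p l * V l j))
        (fun j => f j / (f j + ∑ l, p l * V l j))
      = Ifun V f c p := by
    unfold IPhi Ifun Hent
    have hterm : ∀ i j, p i * V i j * Real.log (p i * V i j / (f j + ∑ l, p l * V l j) / p i)
        = p i * (V i j * Real.log (V i j)) - p i * V i j * Real.log (q j) :=
      fun i j => star_term (hp0 i) (hV0 i j) (hden j)
    have hfterm : ∀ j, f j * Real.log (f j / (f j + ∑ l, p l * V l j))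
        = f j * Real.log (f j) - f j * Real.log (q j) := by
      intro j
      have := star_term (pi := 1) (v := f j) (q := q j) zero_le_one (hf0 j) (hden j)
      simpa using this
    simp only [hterm, hfterm]
    rw [Finset.sum_comm]
    simp only [Finset.sum_sub_distrib, ← Finset.mul_sum]
    have hsplit : ∑ j, q j * Real.log (q j)
        = ∑ j, f j * Real.log (q j) + ∑ j, (∑ i, p i * V i j) * Real.log (q j) := by
      rw [← Finset.sum_add_distrib]
      exact Finset.sum_congr rfl fun j _ => by rw [hqdef]; ring
    have hswap : ∑ j, ∑ i, p i * (V i j * Real.log (V i j))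
        = ∑ i, p i * ∑ j, V i j * Real.log (V i j) := by
      rw [Finset.sum_comm]
      exact Finset.sum_congr rfl fun i _ => by rw [Finset.mul_sum]
    have hswap2 : ∑ j, ∑ i, p i * V i j * Real.log (q j)
        = ∑ j, (∑ i, p i * V i j) * Real.log (q j) :=
      Finset.sum_congr rfl fun j _ => by rw [Finset.sum_mul]
    have hq' : ∀ j, (∑ i, p i * V i j) + f j = q j := fun j => by rw [hqdef]; ring
    simp only [hq', mul_sub, Finset.sum_sub_distrib]
    rw [hswap2]
    have hc : ∑ i, c i * p i = ∑ i, p i * c i :=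
      Finset.sum_congr rfl fun i _ => mul_comm _ _
    have hneg : ∑ x, p x * -∑ j, V x j * Real.log (V x j)
        = -∑ x, p x * ∑ j, V x j * Real.log (V x j) := by
      simp [mul_neg]
    linarith [hsplit, hswap, hc, hneg]
  refine ⟨?_, heq⟩
  intro Φ Φ0 hΦ hΦ0 hΦsum
  rw [← heq]
  unfold IPhi
  have hppos : ∀ i j, 0 < p i * V i j → 0 < p i := by
    intro i j h
    rcases (hp0 i).eq_or_lt with h' | h'
    · rw [← h'] at h; simp at h
    · exact h'
  have hj : ∀ j, (∑ i, p i * V i j * Real.log (Φ j i / p i)) + f j * Real.log (Φ0 j)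
      ≤ (∑ i, p i * V i j * Real.log (p i * V i j / (f j + ∑ l, p l * V l j) / p i))
        + f j * Real.log (f j / (f j + ∑ l, p l * V l j)) := by
    intro j
    have hA : ∀ i ∈ Finset.univ, p i * V i j * Real.log (Φ j i / p i)
        ≤ p i * V i j * Real.log (p i * V i j / q j / p i)
          + (q j * Φ j i - p i * V i j) := fun i _ =>
      gibbs_term (mul_nonneg (hp0 i) (hV0 i j)) (hΦ j i) (hden j) (hppos i j)
    have hB : f j * Real.log (Φ0 j)
        ≤ f j * Real.log (f j / q j) + (q j * Φ0 j - f j) := by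
      have := gibbs_term (t := 1) (hf0 j) (hΦ0 j) (hden j) (fun _ => one_pos)
      simpa using this
    have hS := Finset.sum_le_sum hA
    rw [Finset.sum_add_distrib, Finset.sum_sub_distrib, ← Finset.mul_sum] at hS
    have hΦs : ∑ i, Φ j i = 1 - Φ0 j := by linarith [hΦsum j]
    have hqj : ∑ i, p i * V i j = q j - f j := by rw [hqdef]; ring
    rw [hΦs, hqj] at hS
    have : q j * (1 - Φ0 j) - (q j - f j) = -(q j * Φ0 j - f j) := by ring
    linarith [hS, hB]
  calc (∑ i, ∑ j, p i * V i j * Real.log (Φ j i / p i))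
        + ∑ j, f j * Real.log (Φ0 j) + ∑ i, c i * p i
      = (∑ j, ((∑ i, p i * V i j * Real.log (Φ j i / p i)) + f j * Real.log (Φ0 j)))
        + ∑ i, c i * p i := by
        rw [Finset.sum_comm (f := fun i j => p i * V i j * Real.log (Φ j i / p i)),
          Finset.sum_add_distrib]
    _ ≤ (∑ j, ((∑ i, p i * V i j * Real.log (p i * V i j / (f j + ∑ l, p l * V l j) / p i))
        + f j * Real.log (f j / (f j + ∑ l, p l * V l j)))) + ∑ i, c i * p i := by
        exact add_le_add_left (Finset.sum_le_sum fun j _ => hj j) _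
    _ = (∑ i, ∑ j, p i * V i j * Real.log (p i * V i j / (f j + ∑ l, p l * V l j) / p i))
        + ∑ j, f j * Real.log (f j / (f j + ∑ l, p l * V l j)) + ∑ i, c i * p i := by
        rw [Finset.sum_add_distrib,
          Finset.sum_comm (f := fun j i => p i * V i j * Real.log (p i * V i j / (f j + ∑ l, p l * V l j) / p i))]
end

section
/- Let V be an m×n row-stochastic matrix, f a nonnegative 1×n vector, c ∈ ℝ^m, and r a nonnegative 1×m vector with r_+ := Σ_i r_i < 1. Let Φ = (Φ_{ji}), j = 1,…,n, i = 0,1,…,m, be an n×(m+1) matrix with strictly positive entries satisfying Σ_{i=0}^m Φ_{ji} = 1 for each j, and define I(p,Φ) := Σ_{i=1}^m Σ_{j=1}^n p_i V_{ij} log(Φ_{ji}/p_i) + Σ_{j=1}^n f_j log Φ_{j0} + Σ_{i=1}^m c_i p_i for p ∈ Ω(r), with the convention 0·log 0 = 0. Suppose α > 0 and p* ∈ Ω(r) satisfy p*_i = max{r_i, α·exp(c_i + Σ_j V_{ij} log Φ_{ji})} for every i = 1,…,m. Then I(p*,Φ) ≥ I(p,Φ) for every p ∈ Ω(r). -/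
open Finset

lemma ylogxy {x y : ℝ} (hx : 0 < x) (hy : 0 ≤ y) :
    y * (Real.log x - Real.log y) ≤ x - y := by
  rcases eq_or_lt_of_le hy with h | h
  · simp [← h]; linarith [hx.le]
  · have h1 := Real.log_le_sub_one_of_pos (div_pos hx h)
    rw [Real.log_div hx.ne' h.ne'] at h1
    have h2 : y * (Real.log x - Real.log y) ≤ y * (x / y - 1) :=
      mul_le_mul_of_nonneg_left h1 h.le
    have h3 : y * (x / y - 1) = x - y := by field_simp
    linarith

/-- For fixed `Φ`, the vector `p*` with `p*_i = max{r_i, α·exp(c_i + ∑_j V_{ij} log Φ_{ji})}`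
maximizes `I(p,Φ)` over the restricted simplex `Ω(r)`. -/
theorem waterfilling_maximizes {m n : ℕ} (V : Matrix (Fin m) (Fin n) ℝ)
    (hV0 : ∀ i j, 0 ≤ V i j) (hV1 : ∀ i, ∑ j, V i j = 1)
    (f : Fin n → ℝ) (hf0 : ∀ j, 0 ≤ f j) (c : Fin m → ℝ)
    (r : Fin m → ℝ) (hr0 : ∀ i, 0 ≤ r i) (hr1 : ∑ i, r i < 1)
    (Φ : Fin n → Fin m → ℝ) (Φ0 : Fin n → ℝ)
    (hΦpos : ∀ j i, 0 < Φ j i) (hΦ0pos : ∀ j, 0 < Φ0 j)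
    (hΦsum : ∀ j, Φ0 j + ∑ i, Φ j i = 1)
    (α : ℝ) (hα : 0 < α)
    (pstar : Fin m → ℝ)
    (hps0 : ∀ i, 0 ≤ pstar i) (hpsr : ∀ i, r i ≤ pstar i) (hps1 : ∑ i, pstar i = 1)
    (hpsmax : ∀ i, pstar i =
      max (r i) (α * Real.exp (c i + ∑ j, V i j * Real.log (Φ j i)))) :
    ∀ p : Fin m → ℝ, (∀ i, 0 ≤ p i) → (∀ i, r i ≤ p i) → (∑ i, p i = 1) →
      IPhi V f c p Φ Φ0 ≤ IPhi V f c pstar Φ Φ0 := by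
  intro p hp0 hpr hp1
  set g : Fin m → ℝ := fun i => c i + ∑ j, V i j * Real.log (Φ j i) with hg
  -- pstar is strictly positive
  have hpspos : ∀ i, 0 < pstar i := by
    intro i
    have : (0:ℝ) < α * Real.exp (g i) := by positivity
    calc (0:ℝ) < α * Real.exp (g i) := this
      _ ≤ max (r i) (α * Real.exp (g i)) := le_max_right _ _
      _ = pstar i := (hpsmax i).symm
  -- rewrite IPhi
  have key : ∀ (q : Fin m → ℝ), (∀ i, 0 ≤ q i) →
      IPhi V f c q Φ Φ0 =
        (∑ i, q i * (g i - Real.log (q i))) + ∑ j, f j * Real.log (Φ0 j) := by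
    intro q hq
    unfold IPhi
    have hrow : ∀ i, ∑ j, q i * V i j * Real.log (Φ j i / q i)
        = q i * ((∑ j, V i j * Real.log (Φ j i)) - Real.log (q i)) := by
      intro i
      rcases eq_or_lt_of_le (hq i) with h | h
      · simp [← h]
      · have hlog : ∀ j, Real.log (Φ j i / q i) = Real.log (Φ j i) - Real.log (q i) :=
          fun j => Real.log_div (hΦpos j i).ne' h.ne'
        simp_rw [hlog]
        calc ∑ j, q i * V i j * (Real.log (Φ j i) - Real.log (q i))
            = q i * (∑ j, V i j * Real.log (Φ j i))
              - q i * Real.log (q i) * (∑ j, V i j) := by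
              rw [Finset.mul_sum, Finset.mul_sum, ← Finset.sum_sub_distrib]
              exact Finset.sum_congr rfl fun j _ => by ring
          _ = q i * ((∑ j, V i j * Real.log (Φ j i)) - Real.log (q i)) := by
              rw [hV1 i]; ring
    simp_rw [hrow]
    have : (∑ i, q i * ((∑ j, V i j * Real.log (Φ j i)) - Real.log (q i)))
        + ∑ i, c i * q i = ∑ i, q i * (g i - Real.log (q i)) := by
      rw [← Finset.sum_add_distrib]
      exact Finset.sum_congr rfl fun i _ => by simp only [hg]; ring
    linarith [this]
  rw [key p hp0, key pstar hps0]
  have main : ∑ i, p i * (g i - Real.log (p i))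
      ≤ ∑ i, pstar i * (g i - Real.log (pstar i)) := by
    -- concavity step
    have step1 : ∑ i, p i * (g i - Real.log (p i))
        ≤ ∑ i, (pstar i * (g i - Real.log (pstar i))
            + (p i - pstar i) * (g i - Real.log (pstar i) - 1)) := by
      apply Finset.sum_le_sum
      intro i _
      have := ylogxy (hpspos i) (hp0 i)
      nlinarith [this]
    -- KKT step
    have hzero : ∑ i, (p i - pstar i) = 0 := by
      rw [Finset.sum_sub_distrib, hp1, hps1]; ring
    have step2 : ∑ i, (p i - pstar i) * (g i - Real.log (pstar i) - 1) ≤ 0 := by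
      have heq : ∑ i, (p i - pstar i) * (g i - Real.log (pstar i) - 1)
          = ∑ i, (p i - pstar i) * (g i - Real.log (pstar i) + Real.log α)
            + (- Real.log α - 1) * ∑ i, (p i - pstar i) := by
        rw [Finset.mul_sum, ← Finset.sum_add_distrib]
        exact Finset.sum_congr rfl fun i _ => by ring
      rw [heq, hzero, mul_zero, add_zero]
      apply Finset.sum_nonpos
      intro i _
      rcases le_total (α * Real.exp (g i)) (r i) with hle | hle
      · have hps : pstar i = r i := by rw [hpsmax i]; exact max_eq_left hle
        have hrpos : 0 < r i := hps ▸ hpspos i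
        have hlog : Real.log α + g i ≤ Real.log (r i) := by
          have : Real.log (α * Real.exp (g i)) ≤ Real.log (r i) :=
            Real.log_le_log (by positivity) hle
          rwa [Real.log_mul hα.ne' (Real.exp_ne_zero _), Real.log_exp] at this
        apply mul_nonpos_of_nonneg_of_nonpos
        · rw [hps]; linarith [hpr i]
        · rw [hps]; linarith
      · have hps : pstar i = α * Real.exp (g i) := by rw [hpsmax i]; exact max_eq_right hle
        have hlog : Real.log (pstar i) = Real.log α + g i := by
          rw [hps, Real.log_mul hα.ne' (Real.exp_ne_zero _), Real.log_exp]
        rw [hlog]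
        ring_nf
        simp
    calc ∑ i, p i * (g i - Real.log (p i))
        ≤ ∑ i, (pstar i * (g i - Real.log (pstar i))
            + (p i - pstar i) * (g i - Real.log (pstar i) - 1)) := step1
      _ = ∑ i, pstar i * (g i - Real.log (pstar i))
            + ∑ i, (p i - pstar i) * (g i - Real.log (pstar i) - 1) := by
          rw [Finset.sum_add_distrib]
      _ ≤ ∑ i, pstar i * (g i - Real.log (pstar i)) := by linarith
  linarith
end

section
/- Let V be an m×n row-stochastic matrix, f a nonnegative 1×n vector, c ∈ ℝ^m, and r a nonnegative 1×m vector with r_+ := Σ_i r_i < 1. Let p ∈ Ω(r) have all entries positive and satisfy f_j + (pV)_j > 0 for every j. Define Φ_{ji} := p_i V_{ij}/(f_j + (pV)_j) for i = 1,…,m and Φ_{j0} := f_j/(f_j + (pV)_j), and suppose α > 0 and p' ∈ Ω(r) satisfy p'_i = max{r_i, α·exp(c_i + Σ_j V_{ij} log Φ_{ji})} for all i (with the convention that terms with V_{ij} = 0 are omitted from the exponent). Then I(p'|V,f,c) ≥ I(p|V,f,c); that is, one iteration of the squeezed Arimoto–Blahut update does not decrease the objective. -/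
open Finset

lemma key_ineq {x y : ℝ} (hx : 0 ≤ x) (hy : 0 < y) :
    x - y ≤ x * Real.log x - x * Real.log y := by
  rcases eq_or_lt_of_le hx with h | h
  · simp [← h]; linarith
  · have h2 : Real.log (y / x) ≤ y / x - 1 := Real.log_le_sub_one_of_pos (by positivity)
    rw [Real.log_div hy.ne' h.ne'] at h2
    have h3 := mul_le_mul_of_nonneg_left h2 h.le
    have hxy : x * (y / x - 1) = y - x := by field_simp
    rw [hxy, mul_sub] at h3
    linarith

/-- One iteration of the squeezed Arimoto–Blahut update does not decrease
the objective `I(·|V,f,c)`. -/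
theorem squeezedABA_step_monotone {m n : ℕ} (V : Matrix (Fin m) (Fin n) ℝ)
    (hV0 : ∀ i j, 0 ≤ V i j) (hV1 : ∀ i, ∑ j, V i j = 1)
    (f : Fin n → ℝ) (hf0 : ∀ j, 0 ≤ f j) (c : Fin m → ℝ)
    (r : Fin m → ℝ) (hr0 : ∀ i, 0 ≤ r i) (hr1 : ∑ i, r i < 1)
    (p : Fin m → ℝ) (hppos : ∀ i, 0 < p i) (hpr : ∀ i, r i ≤ p i)
    (hp1 : ∑ i, p i = 1)
    (hden : ∀ j, 0 < f j + ∑ i, p i * V i j)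
    (α : ℝ) (hα : 0 < α)
    (p' : Fin m → ℝ) (hp'0 : ∀ i, 0 ≤ p' i) (hp'r : ∀ i, r i ≤ p' i)
    (hp'1 : ∑ i, p' i = 1)
    (hp' : ∀ i, p' i = max (r i)
      (α * Real.exp (c i + ∑ j, V i j *
        Real.log (p i * V i j / (f j + ∑ l, p l * V l j))))) :
    Ifun V f c p ≤ Ifun V f c p' := by
  classical
  -- abbreviations
  set w : Fin n → ℝ := fun j => f j + ∑ l, p l * V l j with hwdef
  set g : Fin m → ℝ := fun i => c i + ∑ j, V i j * Real.log (p i * V i j / w j) with hgdef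
  have hwpos : ∀ j, 0 < w j := hden
  have hp'' : ∀ i, p' i = max (r i) (α * Real.exp (g i)) := hp'
  have hp'pos : ∀ i, 0 < p' i := by
    intro i
    rw [hp'' i]
    exact lt_of_lt_of_le (by positivity) (le_max_right _ _)
  -- decomposition of g
  have gdecomp : ∀ i, g i = c i + Real.log (p i)
      + (∑ j, V i j * Real.log (V i j)) - ∑ j, V i j * Real.log (w j) := by
    intro i
    have hterm : ∀ j, V i j * Real.log (p i * V i j / w j)
        = V i j * Real.log (p i) + V i j * Real.log (V i j) - V i j * Real.log (w j) := by
      intro j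
      rcases eq_or_lt_of_le (hV0 i j) with h | h
      · simp [← h]
      · rw [Real.log_div (mul_pos (hppos i) h).ne' (hwpos j).ne',
          Real.log_mul (hppos i).ne' h.ne']
        ring
    rw [hgdef]
    simp only []
    rw [Finset.sum_congr rfl (fun j _ => hterm j), Finset.sum_sub_distrib,
      Finset.sum_add_distrib, ← Finset.sum_mul, hV1 i, one_mul]
    ring
  -- expansion identity for Ifun
  have expand : ∀ q : Fin m → ℝ,
      Ifun V f c q = ((∑ i, q i * g i) - ∑ i, q i * Real.log (q i))
        + (∑ j, f j * (Real.log (f j) - Real.log (w j)))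
        - (∑ j, ((∑ i, q i * V i j) + f j) * (Real.log ((∑ i, q i * V i j) + f j) - Real.log (w j)))
        + ∑ i, q i * (Real.log (q i) - Real.log (p i)) := by
    intro q
    have hswap : ∑ i, q i * (∑ j, V i j * Real.log (w j))
        = ∑ j, (∑ i, q i * V i j) * Real.log (w j) := by
      simp_rw [Finset.mul_sum, Finset.sum_mul]
      rw [Finset.sum_comm]
      simp_rw [mul_assoc]
    have e1 : ∑ i, q i * g i
        = (∑ i, q i * c i) + (∑ i, q i * Real.log (p i))
          + (∑ i, q i * (∑ j, V i j * Real.log (V i j)))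
          - ∑ j, (∑ i, q i * V i j) * Real.log (w j) := by
      calc ∑ i, q i * g i
          = ∑ i, (q i * c i + q i * Real.log (p i)
              + q i * (∑ j, V i j * Real.log (V i j))
              - q i * (∑ j, V i j * Real.log (w j))) :=
            Finset.sum_congr rfl fun i _ => by rw [gdecomp i]; ring
        _ = _ := by
            rw [Finset.sum_sub_distrib, Finset.sum_add_distrib,
              Finset.sum_add_distrib, hswap]
    have e2 : ∑ j, f j * (Real.log (f j) - Real.log (w j))
        = (∑ j, f j * Real.log (f j)) - ∑ j, f j * Real.log (w j) := by
      simp_rw [mul_sub, Finset.sum_sub_distrib]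
    have e3 : ∑ j, ((∑ i, q i * V i j) + f j) * (Real.log ((∑ i, q i * V i j) + f j) - Real.log (w j))
        = (∑ j, ((∑ i, q i * V i j) + f j) * Real.log ((∑ i, q i * V i j) + f j))
          - ((∑ j, (∑ i, q i * V i j) * Real.log (w j)) + ∑ j, f j * Real.log (w j)) := by
      simp_rw [mul_sub, add_mul, Finset.sum_sub_distrib, Finset.sum_add_distrib]
    have e4 : ∑ i, q i * (Real.log (q i) - Real.log (p i))
        = (∑ i, q i * Real.log (q i)) - ∑ i, q i * Real.log (p i) := by
      simp_rw [mul_sub, Finset.sum_sub_distrib]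
    have e5 : Ifun V f c q
        = -(∑ j, ((∑ i, q i * V i j) + f j) * Real.log ((∑ i, q i * V i j) + f j))
          + ((∑ i, q i * c i) + ∑ i, q i * (∑ j, V i j * Real.log (V i j)))
          + ∑ j, f j * Real.log (f j) := by
      simp only [Ifun, Hent, sub_neg_eq_add, mul_add]
      rw [Finset.sum_add_distrib]
    rw [e1, e2, e3, e4, e5]
    ring
  -- Part A : the update maximizes q ↦ ∑ q g − ∑ q log q over Ω(r)
  have step1 : ∀ i, p i * g i - p i * Real.log (p i)
      ≤ (p' i * g i - p' i * Real.log (p' i))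
        + (p i - p' i) * (g i - Real.log (p' i)) - (p i - p' i) := by
    intro i
    have h := key_ineq (hppos i).le (hp'pos i)
    nlinarith [h]
  have step2 : ∀ i, (p i - p' i) * (g i - Real.log (p' i))
      ≤ (p i - p' i) * (-Real.log α) := by
    intro i
    rcases le_total (r i) (α * Real.exp (g i)) with h | h
    · have hps : p' i = α * Real.exp (g i) := by rw [hp'' i, max_eq_right h]
      rw [hps, Real.log_mul hα.ne' (Real.exp_ne_zero _), Real.log_exp]
      apply le_of_eq; ring
    · have hps : p' i = r i := by rw [hp'' i, max_eq_left h]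
      have hri : 0 < r i := lt_of_lt_of_le (by positivity) h
      have hlog : g i - Real.log (r i) ≤ -Real.log α := by
        have hll : Real.log (α * Real.exp (g i)) ≤ Real.log (r i) :=
          Real.log_le_log (by positivity) h
        rw [Real.log_mul hα.ne' (Real.exp_ne_zero _), Real.log_exp] at hll
        linarith
      rw [hps]
      exact mul_le_mul_of_nonneg_left hlog (by linarith [hpr i])
  have hsum2 : ∑ i, (p i - p' i) * (g i - Real.log (p' i)) ≤ 0 := by
    calc ∑ i, (p i - p' i) * (g i - Real.log (p' i))
        ≤ ∑ i, (p i - p' i) * (-Real.log α) :=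
          Finset.sum_le_sum fun i _ => step2 i
      _ = (∑ i, (p i - p' i)) * (-Real.log α) := (Finset.sum_mul _ _ _).symm
      _ = 0 := by rw [Finset.sum_sub_distrib, hp1, hp'1]; ring
  have partA : ∑ i, p i * g i - ∑ i, p i * Real.log (p i)
      ≤ ∑ i, p' i * g i - ∑ i, p' i * Real.log (p' i) := by
    have h1 := Finset.sum_le_sum fun i (_ : i ∈ Finset.univ) => step1 i
    simp only [Finset.sum_sub_distrib, Finset.sum_add_distrib] at h1
    rw [hp1, hp'1] at h1
    linarith [hsum2]
  -- positivity of the updated denominators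
  have hW'pos : ∀ j, 0 < (∑ i, p' i * V i j) + f j := by
    intro j
    by_contra hc
    push_neg at hc
    have h1 : 0 ≤ ∑ i, p' i * V i j :=
      Finset.sum_nonneg fun i _ => mul_nonneg (hp'pos i).le (hV0 i j)
    have hs : ∑ i, p' i * V i j = 0 := le_antisymm (by linarith [hf0 j]) h1
    have hfj : f j = 0 := by linarith [hf0 j]
    have hVz : ∀ i, V i j = 0 := by
      intro i
      have hz := (Finset.sum_eq_zero_iff_of_nonneg
        (fun i _ => mul_nonneg (hp'pos i).le (hV0 i j))).1 hs i (Finset.mem_univ i)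
      rcases mul_eq_zero.1 hz with h | h
      · exact absurd h (hp'pos i).ne'
      · exact h
    have : w j = 0 := by
      rw [hwdef]
      simp only [hfj]
      rw [Finset.sum_eq_zero fun i _ => by rw [hVz i, mul_zero]]
      ring
    exact absurd this (hwpos j).ne'
  -- Part B : log-sum (data-processing) inequality, coordinatewise in j
  have step3 : ∀ j, ((∑ i, p' i * V i j) + f j)
        * (Real.log ((∑ i, p' i * V i j) + f j) - Real.log (w j))
      ≤ ∑ i, (p' i * V i j) * (Real.log (p' i) - Real.log (p i)) := by
    intro j
    have hWj : 0 < (∑ i, p' i * V i j) + f j := hW'pos j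
    have hwj : 0 < w j := hwpos j
    set t : ℝ := ((∑ i, p' i * V i j) + f j) / w j with htdef
    have ht : 0 < t := div_pos hWj hwj
    have htw : t * w j = (∑ i, p' i * V i j) + f j := div_mul_cancel₀ _ hwj.ne'
    have htw' : t * f j + t * (∑ i, p i * V i j) = (∑ i, p' i * V i j) + f j := by
      have hwj_eq : w j = f j + ∑ i, p i * V i j := rfl
      rw [hwj_eq] at htw
      linarith [htw]
    have hterm : ∀ i, p' i * V i j - t * (p i * V i j)
        ≤ (p' i * V i j) * (Real.log (p' i) - Real.log (p i))
          - (p' i * V i j) * Real.log t := by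
      intro i
      rcases eq_or_lt_of_le (hV0 i j) with h | h
      · simp [← h]
      · have hk := key_ineq (x := p' i * V i j) (y := t * (p i * V i j))
          (mul_nonneg (hp'pos i).le h.le) (mul_pos ht (mul_pos (hppos i) h))
        rw [Real.log_mul (hp'pos i).ne' h.ne',
          Real.log_mul ht.ne' (mul_pos (hppos i) h).ne',
          Real.log_mul (hppos i).ne' h.ne'] at hk
        nlinarith [hk]
    have hsum := Finset.sum_le_sum fun i (_ : i ∈ Finset.univ) => hterm i
    simp only [Finset.sum_sub_distrib, ← Finset.mul_sum, ← Finset.sum_mul] at hsum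
    have hft : f j * Real.log t ≤ f j * (t - 1) :=
      mul_le_mul_of_nonneg_left (Real.log_le_sub_one_of_pos ht) (hf0 j)
    have hlogt : Real.log t = Real.log ((∑ i, p' i * V i j) + f j) - Real.log (w j) :=
      Real.log_div hWj.ne' hwj.ne'
    rw [← hlogt]
    nlinarith [hsum, hft, htw']
  have hsum3 : ∑ j, ((∑ i, p' i * V i j) + f j)
        * (Real.log ((∑ i, p' i * V i j) + f j) - Real.log (w j))
      ≤ ∑ i, p' i * (Real.log (p' i) - Real.log (p i)) := by
    calc ∑ j, ((∑ i, p' i * V i j) + f j)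
          * (Real.log ((∑ i, p' i * V i j) + f j) - Real.log (w j))
        ≤ ∑ j, ∑ i, (p' i * V i j) * (Real.log (p' i) - Real.log (p i)) :=
          Finset.sum_le_sum fun j _ => step3 j
      _ = ∑ i, p' i * (Real.log (p' i) - Real.log (p i)) := by
          rw [Finset.sum_comm]
          refine Finset.sum_congr rfl fun i _ => ?_
          rw [← Finset.sum_mul, ← Finset.mul_sum, hV1 i, mul_one]
  -- combine everything
  have Ep := expand p
  have Ep' := expand p'
  have hzero1 : ∑ j, ((∑ i, p i * V i j) + f j)
      * (Real.log ((∑ i, p i * V i j) + f j) - Real.log (w j)) = 0 := by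
    refine Finset.sum_eq_zero fun j _ => ?_
    have : (∑ i, p i * V i j) + f j = w j := by
      rw [hwdef]; exact add_comm _ _
    rw [this, sub_self, mul_zero]
  have hzero2 : ∑ i, p i * (Real.log (p i) - Real.log (p i)) = 0 := by
    simp
  rw [hzero1, hzero2] at Ep
  linarith [partA, hsum3, Ep, Ep']
end

section
/- (Monotonic convergence of the doubly squeezed Arimoto–Blahut algorithm.) Let V be an m×n row-stochastic matrix, f a nonnegative 1×n vector, c ∈ ℝ^m, and r a nonnegative 1×m vector with r_+ := Σ_i r_i < 1. Assume that for every j, either f_j > 0 or the j-th column of V is not identically zero. Let p^{(0)} ∈ Ω(r) have all entries positive, and for t ≥ 0 define Φ^{(t)}_{ji} := p^{(t)}_i V_{ij}/(f_j + (p^{(t)}V)_j) and p^{(t+1)}_i := max{r_i, α^{(t)}·exp(c_i + Σ_j V_{ij} log Φ^{(t)}_{ji})} (terms with V_{ij} = 0 omitted from the exponent), where α^{(t)} > 0 is chosen so that Σ_i p^{(t+1)}_i = 1. Then the limit p^{(∞)} := lim_{t→∞} p^{(t)} exists, and the sequence I(p^{(t)}|V,f,c) is nondecreasing in t and converges to sup_{p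 ∈ Ω(r)} I(p|V,f,c). -/
open Finset

/-- Relative-entropy-like sum `∑ q i (log q i − log p i)`. -/
noncomputable def Dkl {m : ℕ} (q p : Fin m → ℝ) : ℝ :=
  ∑ i, q i * (Real.log (q i) - Real.log (p i))

/-- Pointwise Gibbs inequality. -/
lemma gibbs_pt {a b : ℝ} (ha : 0 < a) (hb : 0 ≤ b) :
    b - a ≤ b * (Real.log b - Real.log a) := by
  rcases eq_or_lt_of_le hb with h | h
  · simp [← h]; linarith
  · have h1 := Real.log_le_sub_one_of_pos (show 0 < a / b by positivity)
    rw [Real.log_div (ne_of_gt ha) (ne_of_gt h)] at h1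
    have h2 := mul_le_mul_of_nonneg_left h1 h.le
    have h3 : b * (a / b) = a := by field_simp
    nlinarith
/-- Strict pointwise Gibbs inequality. -/
lemma gibbs_pt_strict {a b : ℝ} (ha : 0 < a) (hb : 0 < b) (hne : a ≠ b) :
    b - a < b * (Real.log b - Real.log a) := by
  have h1 := Real.log_lt_sub_one_of_pos (show 0 < a / b by positivity)
    (by intro h; exact hne (by field_simp at h; linarith))
  rw [Real.log_div (ne_of_gt ha) (ne_of_gt hb)] at h1
  have h2 := mul_lt_mul_of_pos_left h1 hb
  have h3 : b * (a / b) = a := by field_simp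
  nlinarith

/-- Nonnegativity of `Dkl` for equal-mass nonnegative vs positive vectors. -/
lemma Dkl_nonneg {m : ℕ} {q p : Fin m → ℝ} (hq : ∀ i, 0 ≤ q i) (hp : ∀ i, 0 < p i)
    (hs : ∑ i, q i = ∑ i, p i) : 0 ≤ Dkl q p := by
  have h : ∑ i, (q i - p i) ≤ Dkl q p :=
    Finset.sum_le_sum fun i _ => gibbs_pt (hp i) (hq i)
  rw [Finset.sum_sub_distrib, hs, sub_self] at h
  exact h

/-- key elementary bound for the log-sum inequality. -/
lemma logsum_pt {v w A B : ℝ} (hv : 0 < v) (hw : 0 < w) (hA : 0 < A) (hB : 0 < B) :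
    w * (Real.log B - Real.log A) + w - v * B / A ≤ w * (Real.log w - Real.log v) := by
  have h1 := Real.log_le_sub_one_of_pos (show 0 < v * B / (w * A) by positivity)
  rw [Real.log_div (by positivity) (by positivity), Real.log_mul (ne_of_gt hv) (ne_of_gt hB),
    Real.log_mul (ne_of_gt hw) (ne_of_gt hA)] at h1
  have h2 := mul_le_mul_of_nonneg_left h1 hw.le
  have h3 : w * (v * B / (w * A)) = v * B / A := by field_simp
  nlinarith

lemma logsum_le {m n : ℕ} (V : Matrix (Fin m) (Fin n) ℝ)
    (hV0 : ∀ i j, 0 ≤ V i j) (hV1 : ∀ i, ∑ j, V i j = 1)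
    (f : Fin n → ℝ) (hf0 : ∀ j, 0 ≤ f j)
    {pb w : Fin m → ℝ} (hpb : ∀ i, 0 < pb i)
    (hQb : ∀ j, 0 < (∑ l, pb l * V l j) + f j) (hw : ∀ i, 0 ≤ w i) :
    ∑ j, ((∑ i, w i * V i j) + f j) *
        (Real.log ((∑ i, w i * V i j) + f j) - Real.log ((∑ l, pb l * V l j) + f j))
      ≤ Dkl w pb := by
  have hDkl : Dkl w pb = ∑ j, ∑ i, (w i * V i j) * (Real.log (w i) - Real.log (pb i)) := by
    rw [Finset.sum_comm]
    unfold Dkl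
    refine Finset.sum_congr rfl fun i _ => ?_
    have h : ∑ j, (w i * V i j) * (Real.log (w i) - Real.log (pb i))
        = (∑ j, V i j) * (w i * (Real.log (w i) - Real.log (pb i))) := by
      rw [Finset.sum_mul]
      exact Finset.sum_congr rfl fun j _ => by ring
    rw [h, hV1, one_mul]
  rw [hDkl]
  refine Finset.sum_le_sum fun j _ => ?_
  have hSw0 : 0 ≤ ∑ i, w i * V i j :=
    Finset.sum_nonneg fun i _ => mul_nonneg (hw i) (hV0 i j)
  have hB0 : 0 ≤ (∑ i, w i * V i j) + f j := by linarith [hf0 j]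
  rcases eq_or_lt_of_le hB0 with hB | hB
  · rw [← hB, zero_mul]
    refine Finset.sum_nonneg fun i _ => ?_
    have hSw : ∑ i, w i * V i j = 0 := le_antisymm (by linarith [hf0 j]) hSw0
    have hz : w i * V i j = 0 :=
      (Finset.sum_eq_zero_iff_of_nonneg
        (fun i _ => mul_nonneg (hw i) (hV0 i j))).1 hSw i (Finset.mem_univ i)
    rw [hz, zero_mul]
  · set B := (∑ i, w i * V i j) + f j with hBdef
    set Aj := (∑ l, pb l * V l j) + f j with hAdef
    have hApos : 0 < Aj := hQb j
    have key : ∀ i ∈ Finset.univ, (w i * V i j) * (Real.log B - Real.log Aj) + (w i * V i j)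
        - (pb i * V i j) * B / Aj ≤ (w i * V i j) * (Real.log (w i) - Real.log (pb i)) := by
      intro i _
      rcases eq_or_lt_of_le (mul_nonneg (hw i) (hV0 i j)) with h | h
      · rw [← h]
        simp only [zero_mul, add_zero, zero_add, zero_sub, neg_nonpos]
        have : 0 ≤ (pb i * V i j) * B / Aj :=
          div_nonneg (mul_nonneg (mul_nonneg (hpb i).le (hV0 i j)) hB.le) hApos.le
        linarith
      · have hV : 0 < V i j := by
          rcases eq_or_lt_of_le (hV0 i j) with h' | h'
          · rw [← h'] at h; simp at h
          · exact h'
        have hwi : 0 < w i := by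
          rcases eq_or_lt_of_le (hw i) with h' | h'
          · rw [← h'] at h; simp at h
          · exact h'
        have hls := logsum_pt (v := pb i * V i j) (w := w i * V i j)
          (mul_pos (hpb i) hV) h hApos hB
        rw [Real.log_mul (ne_of_gt hwi) (ne_of_gt hV),
          Real.log_mul (ne_of_gt (hpb i)) (ne_of_gt hV)] at hls
        have heq : (w i * V i j) * (Real.log (w i) + Real.log (V i j)
            - (Real.log (pb i) + Real.log (V i j)))
            = (w i * V i j) * (Real.log (w i) - Real.log (pb i)) := by ring
        linarith [hls, heq.symm.le]
    have keyf : f j * (Real.log B - Real.log Aj) + f j - f j * B / Aj ≤ 0 := by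
      rcases eq_or_lt_of_le (hf0 j) with h | h
      · rw [← h]; simp
      · have := logsum_pt h h hApos hB
        simpa using this
    have hsum := Finset.sum_le_sum key
    have hcalc : ∑ i, ((w i * V i j) * (Real.log B - Real.log Aj) + (w i * V i j)
          - (pb i * V i j) * B / Aj)
        + (f j * (Real.log B - Real.log Aj) + f j - f j * B / Aj)
        = B * (Real.log B - Real.log Aj) := by
      simp only [Finset.sum_add_distrib, Finset.sum_sub_distrib, ← Finset.sum_mul]
      have h1 : ∑ i, (pb i * V i j) * B / Aj = (∑ l, pb l * V l j) * B / Aj := by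
        rw [← Finset.sum_div, ← Finset.sum_mul]
      have hk : (∑ l, pb l * V l j) * B / Aj + f j * B / Aj = B := by
        rw [← add_div, ← add_mul, ← hAdef]
        exact mul_div_cancel_left₀ B hApos.ne'
      rw [h1]
      linear_combination (-1:ℝ) * hk - (Real.log B - Real.log Aj + 1) * hBdef
    have hfin := add_le_add hsum keyf
    calc B * (Real.log B - Real.log Aj)
        = ∑ i, ((w i * V i j) * (Real.log B - Real.log Aj) + (w i * V i j)
            - (pb i * V i j) * B / Aj)
          + (f j * (Real.log B - Real.log Aj) + f j - f j * B / Aj) := hcalc.symm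
      _ ≤ ∑ i, (w i * V i j) * (Real.log (w i) - Real.log (pb i)) + 0 := hfin
      _ = _ := add_zero _

lemma expandI {m n : ℕ} (V : Matrix (Fin m) (Fin n) ℝ)
    (f : Fin n → ℝ) (c : Fin m → ℝ) (w : Fin m → ℝ) :
    Ifun V f c w = (∑ i, w i * c i) + (∑ i, w i * ∑ j, V i j * Real.log (V i j))
      - (∑ j, ((∑ i, w i * V i j) + f j) * Real.log ((∑ i, w i * V i j) + f j))
      + (∑ j, f j * Real.log (f j)) := by
  simp only [Ifun, Hent, sub_neg_eq_add, mul_add, Finset.sum_add_distrib]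
  ring

lemma a_sum {m n : ℕ} (V : Matrix (Fin m) (Fin n) ℝ)
    (hV0 : ∀ i j, 0 ≤ V i j) (hV1 : ∀ i, ∑ j, V i j = 1)
    (f : Fin n → ℝ) (c : Fin m → ℝ)
    {pb : Fin m → ℝ} (hpb : ∀ i, 0 < pb i)
    (hQb : ∀ j, 0 < (∑ l, pb l * V l j) + f j) (w : Fin m → ℝ) :
    ∑ i, w i * (c i + ∑ j, V i j * Real.log (pb i * V i j / ((∑ l, pb l * V l j) + f j)))
      = ∑ i, w i * c i + ∑ i, w i * Real.log (pb i)
        + ∑ i, w i * ∑ j, V i j * Real.log (V i j)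
        - ∑ j, (∑ i, w i * V i j) * Real.log ((∑ l, pb l * V l j) + f j) := by
  have h1 : ∀ i, (∑ j, V i j * Real.log (pb i * V i j / ((∑ l, pb l * V l j) + f j)))
      = Real.log (pb i) + (∑ j, V i j * Real.log (V i j))
        - ∑ j, V i j * Real.log ((∑ l, pb l * V l j) + f j) := by
    intro i
    have hsplit : ∀ j ∈ Finset.univ,
        V i j * Real.log (pb i * V i j / ((∑ l, pb l * V l j) + f j))
        = V i j * Real.log (pb i) + V i j * Real.log (V i j)
          - V i j * Real.log ((∑ l, pb l * V l j) + f j) := by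
      intro j _
      rcases eq_or_lt_of_le (hV0 i j) with h | h
      · rw [← h]; simp
      · rw [Real.log_div (ne_of_gt (mul_pos (hpb i) h)) (ne_of_gt (hQb j)),
          Real.log_mul (ne_of_gt (hpb i)) (ne_of_gt h)]
        ring
    rw [Finset.sum_congr rfl hsplit, Finset.sum_sub_distrib, Finset.sum_add_distrib,
      ← Finset.sum_mul, hV1, one_mul]
  have h2 : ∑ i, w i * ∑ j, V i j * Real.log ((∑ l, pb l * V l j) + f j)
      = ∑ j, (∑ i, w i * V i j) * Real.log ((∑ l, pb l * V l j) + f j) := by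
    simp_rw [Finset.mul_sum, Finset.sum_mul, ← mul_assoc]
    exact Finset.sum_comm
  calc ∑ i, w i * (c i + ∑ j, V i j * Real.log (pb i * V i j / ((∑ l, pb l * V l j) + f j)))
      = ∑ i, (w i * c i + w i * Real.log (pb i) + w i * (∑ j, V i j * Real.log (V i j))
          - w i * ∑ j, V i j * Real.log ((∑ l, pb l * V l j) + f j)) := by
        refine Finset.sum_congr rfl fun i _ => ?_
        rw [h1 i]; ring
    _ = _ := by
        rw [Finset.sum_sub_distrib, Finset.sum_add_distrib, Finset.sum_add_distrib, h2]

lemma step_ineq {m n : ℕ} (V : Matrix (Fin m) (Fin n) ℝ)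
    (hV0 : ∀ i j, 0 ≤ V i j) (hV1 : ∀ i, ∑ j, V i j = 1)
    (f : Fin n → ℝ) (hf0 : ∀ j, 0 ≤ f j) (c : Fin m → ℝ) (r : Fin m → ℝ)
    {pb pn q : Fin m → ℝ} {A : ℝ} (hA : 0 < A)
    (hpb : ∀ i, 0 < pb i) (hpbs : ∑ i, pb i = 1)
    (hQb : ∀ j, 0 < (∑ l, pb l * V l j) + f j)
    (hpn : ∀ i, pn i = max (r i) (A * Real.exp (c i + ∑ j, V i j *
        Real.log (pb i * V i j / ((∑ l, pb l * V l j) + f j)))))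
    (hpns : ∑ i, pn i = 1)
    (hq0 : ∀ i, 0 ≤ q i) (hqr : ∀ i, r i ≤ q i) (hqs : ∑ i, q i = 1) :
    Ifun V f c q ≤ Ifun V f c pn + Dkl q pb - Dkl q pn := by
  obtain ⟨a, ha⟩ : ∃ a : Fin m → ℝ, a = fun i => c i + ∑ j, V i j *
      Real.log (pb i * V i j / ((∑ l, pb l * V l j) + f j)) := ⟨_, rfl⟩
  have hpna : ∀ i, pn i = max (r i) (A * Real.exp (a i)) := by
    intro i; simp only [ha]; exact hpn i
  have hasum : ∀ w : Fin m → ℝ, ∑ i, w i * a i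
      = ∑ i, w i * c i + ∑ i, w i * Real.log (pb i)
        + ∑ i, w i * ∑ j, V i j * Real.log (V i j)
        - ∑ j, (∑ i, w i * V i j) * Real.log ((∑ l, pb l * V l j) + f j) := by
    intro w; simp only [ha]; exact a_sum V hV0 hV1 f c hpb hQb w
  have hpn0 : ∀ i, 0 < pn i := fun i => by
    rw [hpna i]; exact lt_max_of_lt_right (by positivity)
  -- the master identity  I(w) = g(w) + Cf + Dkl w pb − DQ w
  have hident : ∀ w : Fin m → ℝ,
      Ifun V f c w = ((∑ i, w i * a i) - ∑ i, w i * Real.log (w i))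
        + (∑ j, f j * (Real.log (f j) - Real.log ((∑ l, pb l * V l j) + f j)))
        + Dkl w pb
        - (∑ j, ((∑ i, w i * V i j) + f j) *
            (Real.log ((∑ i, w i * V i j) + f j)
              - Real.log ((∑ l, pb l * V l j) + f j))) := by
    intro w
    rw [expandI V f c w, hasum w]
    unfold Dkl
    simp only [mul_sub, add_mul, Finset.sum_sub_distrib, Finset.sum_add_distrib]
    ring
  -- A2 applied to pn
  have hA2 : ∑ j, ((∑ i, pn i * V i j) + f j) *
        (Real.log ((∑ i, pn i * V i j) + f j) - Real.log ((∑ l, pb l * V l j) + f j))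
      ≤ Dkl pn pb := logsum_le V hV0 hV1 f hf0 hpb hQb (fun i => (hpn0 i).le)
  -- DQ q nonneg
  have hDQq : 0 ≤ ∑ j, ((∑ i, q i * V i j) + f j) *
      (Real.log ((∑ i, q i * V i j) + f j) - Real.log ((∑ l, pb l * V l j) + f j)) := by
    have hpt : ∀ j ∈ Finset.univ, ((∑ i, q i * V i j) + f j) - ((∑ l, pb l * V l j) + f j)
        ≤ ((∑ i, q i * V i j) + f j) *
          (Real.log ((∑ i, q i * V i j) + f j) - Real.log ((∑ l, pb l * V l j) + f j)) :=
      fun j _ => gibbs_pt (hQb j)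
        (add_nonneg (Finset.sum_nonneg fun i _ => mul_nonneg (hq0 i) (hV0 i j)) (hf0 j))
    have h := Finset.sum_le_sum hpt
    have heq : ∑ j, (((∑ i, q i * V i j) + f j) - ((∑ l, pb l * V l j) + f j)) = 0 := by
      rw [Finset.sum_sub_distrib, Finset.sum_add_distrib, Finset.sum_add_distrib]
      have e1 : ∑ j, ∑ i, q i * V i j = 1 := by
        rw [Finset.sum_comm]
        simp_rw [← Finset.mul_sum]
        simp_rw [hV1, mul_one]
        exact hqs
      have e2 : ∑ j, ∑ l, pb l * V l j = 1 := by
        rw [Finset.sum_comm]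
        simp_rw [← Finset.mul_sum]
        simp_rw [hV1, mul_one]
        exact hpbs
      rw [e1, e2]; ring
    linarith [heq ▸ h]
  -- A3 : g q + Dkl q pn ≤ g pn
  have hA3 : ((∑ i, q i * a i) - ∑ i, q i * Real.log (q i)) + Dkl q pn
      ≤ (∑ i, pn i * a i) - ∑ i, pn i * Real.log (pn i) := by
    have hper : ∀ i ∈ Finset.univ,
        0 ≤ (pn i - q i) * ((a i + Real.log A) - Real.log (pn i)) := by
      intro i _
      rcases le_or_gt (r i) (A * Real.exp (a i)) with h | h
      · have hpni : pn i = A * Real.exp (a i) := by rw [hpna i]; exact max_eq_right h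
        have hlog : Real.log (pn i) = Real.log A + a i := by
          rw [hpni, Real.log_mul (ne_of_gt hA) (ne_of_gt (Real.exp_pos _)), Real.log_exp]
        rw [hlog]
        have h0 : a i + Real.log A - (Real.log A + a i) = 0 := by ring
        rw [h0, mul_zero]
      · have hpni : pn i = r i := by rw [hpna i]; exact max_eq_left h.le
        have hri : 0 < r i := lt_trans (by positivity) h
        have hlt : a i + Real.log A - Real.log (r i) < 0 := by
          have := Real.log_lt_log (by positivity : (0:ℝ) < A * Real.exp (a i)) h
          rw [Real.log_mul (ne_of_gt hA) (ne_of_gt (Real.exp_pos _)), Real.log_exp] at this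
          linarith
        have hle : pn i - q i ≤ 0 := by rw [hpni]; linarith [hqr i]
        rw [hpni]
        nlinarith
    have hsum := Finset.sum_nonneg hper
    have hexp : ∑ i, (pn i - q i) * ((a i + Real.log A) - Real.log (pn i))
        = ((∑ i, pn i * a i) - ∑ i, pn i * Real.log (pn i))
          - (((∑ i, q i * a i) - ∑ i, q i * Real.log (q i)) + Dkl q pn)
          + Real.log A * ((∑ i, pn i) - (∑ i, q i)) := by
      unfold Dkl
      simp only [sub_mul, mul_sub, mul_add, add_mul, Finset.sum_sub_distrib,
        Finset.sum_add_distrib, ← Finset.sum_mul]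
      ring
    rw [hexp, hpns, hqs] at hsum
    simp at hsum
    linarith
  have hq1 := hident q
  have hn1 := hident pn
  linarith [hq1, hn1, hA2, hDQq, hA3]

lemma Ifun_continuous {m n : ℕ} (V : Matrix (Fin m) (Fin n) ℝ)
    (f : Fin n → ℝ) (c : Fin m → ℝ) :
    Continuous fun q : Fin m → ℝ => Ifun V f c q := by
  have key : ∀ g : (Fin m → ℝ) → ℝ, Continuous g →
      Continuous fun q => g q * Real.log (g q) :=
    fun g hg => Real.continuous_mul_log.comp hg
  simp only [Ifun, Hent]
  apply Continuous.sub
  · apply Continuous.add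
    · apply Continuous.neg
      apply continuous_finset_sum
      intro j _
      exact key _ (((continuous_finset_sum _ fun i _ =>
        (continuous_apply i).mul continuous_const)).add continuous_const)
    · apply continuous_finset_sum
      intro i _
      exact (continuous_apply i).mul continuous_const
  · exact continuous_const

lemma core_left {x y1 y2 : ℝ} (h1 : 0 < y1) (h12 : y1 ≤ y2) (h2x : y2 ≤ x) :
    y2 - y1 ≤ x * (Real.log y2 - Real.log y1) := by
  have hy2 : 0 < y2 := lt_of_lt_of_le h1 h12
  have hx : 0 < x := lt_of_lt_of_le hy2 h2x
  have h1' := Real.log_le_sub_one_of_pos (show 0 < y1 / y2 by positivity)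
  rw [Real.log_div (ne_of_gt h1) (ne_of_gt hy2)] at h1'
  have key : (y2 - y1) / y2 ≤ Real.log y2 - Real.log y1 := by
    have e : 1 - y1 / y2 = (y2 - y1) / y2 := by field_simp
    linarith [e ▸ (by linarith : 1 - y1 / y2 ≤ Real.log y2 - Real.log y1)]
  have k2 : x * ((y2 - y1) / y2) ≤ x * (Real.log y2 - Real.log y1) :=
    mul_le_mul_of_nonneg_left key hx.le
  have k3 : y2 - y1 ≤ x * ((y2 - y1) / y2) := by
    have e : x * ((y2 - y1) / y2) - (y2 - y1) = (y2 - y1) * (x - y2) / y2 := by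
      field_simp
    have : 0 ≤ (y2 - y1) * (x - y2) / y2 :=
      div_nonneg (mul_nonneg (by linarith) (by linarith)) hy2.le
    linarith
  linarith

lemma core_right {x y1 y2 : ℝ} (hx : 0 < x) (hx1 : x ≤ y1) (h12 : y1 ≤ y2) :
    x * (Real.log y2 - Real.log y1) ≤ y2 - y1 := by
  have hy1 : 0 < y1 := lt_of_lt_of_le hx hx1
  have hy2 : 0 < y2 := lt_of_lt_of_le hy1 h12
  have h1' := Real.log_le_sub_one_of_pos (show 0 < y2 / y1 by positivity)
  rw [Real.log_div (ne_of_gt hy2) (ne_of_gt hy1)] at h1'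
  -- log y2 − log y1 ≤ (y2 − y1)/y1
  have key : Real.log y2 - Real.log y1 ≤ (y2 - y1) / y1 := by
    have e : y2 / y1 - 1 = (y2 - y1) / y1 := by field_simp
    linarith [e ▸ h1']
  have k2 : x * (Real.log y2 - Real.log y1) ≤ x * ((y2 - y1) / y1) :=
    mul_le_mul_of_nonneg_left key hx.le
  have k3 : x * ((y2 - y1) / y1) ≤ y2 - y1 := by
    have e : (y2 - y1) - x * ((y2 - y1) / y1) = (y2 - y1) * (y1 - x) / y1 := by
      field_simp
    have : 0 ≤ (y2 - y1) * (y1 - x) / y1 :=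
      div_nonneg (mul_nonneg (by linarith) (by linarith)) hy1.le
    linarith
  linarith

/-- Monotonic convergence of the doubly squeezed Arimoto–Blahut algorithm:
the iterates converge, and the objective values increase monotonically to
the supremum of `I(·|V,f,c)` over `Ω(r)`. -/
theorem squeezedABA_monotone_convergence {m n : ℕ}
    (V : Matrix (Fin m) (Fin n) ℝ)
    (hV0 : ∀ i j, 0 ≤ V i j) (hV1 : ∀ i, ∑ j, V i j = 1)
    (f : Fin n → ℝ) (hf0 : ∀ j, 0 ≤ f j) (c : Fin m → ℝ)
    (r : Fin m → ℝ) (hr0 : ∀ i, 0 ≤ r i) (hr1 : ∑ i, r i < 1)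
    (hcol : ∀ j, 0 < f j ∨ ∃ i, 0 < V i j)
    (p : ℕ → Fin m → ℝ) (α : ℕ → ℝ)
    (hp0pos : ∀ i, 0 < p 0 i) (hp0r : ∀ i, r i ≤ p 0 i) (hp0sum : ∑ i, p 0 i = 1)
    (hα : ∀ t, 0 < α t)
    (hrec : ∀ t i, p (t + 1) i = max (r i)
      (α t * Real.exp (c i + ∑ j, V i j *
        Real.log (p t i * V i j / (f j + ∑ l, p t l * V l j)))))
    (hsum : ∀ t, ∑ i, p (t + 1) i = 1) :
    (∃ plim : Fin m → ℝ, Filter.Tendsto p Filter.atTop (nhds plim))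
    ∧ Monotone (fun t => Ifun V f c (p t))
    ∧ Filter.Tendsto (fun t => Ifun V f c (p t)) Filter.atTop
        (nhds (sSup {x : ℝ | ∃ q : Fin m → ℝ,
          (∀ i, 0 ≤ q i) ∧ (∀ i, r i ≤ q i) ∧ (∑ i, q i = 1) ∧ x = Ifun V f c q})) := by
  classical
  have hpsum : ∀ t, ∑ i, p t i = 1 := by
    intro t; cases t with
    | zero => exact hp0sum
    | succ t => exact hsum t
  have hppos : ∀ t i, 0 < p t i := by
    intro t
    induction t with
    | zero => exact hp0pos
    | succ t ih =>
      intro i; rw [hrec t i]; exact lt_max_of_lt_right (mul_pos (hα t) (Real.exp_pos _))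
  have hpr : ∀ t i, r i ≤ p t i := by
    intro t i; cases t with
    | zero => exact hp0r i
    | succ t => rw [hrec t i]; exact le_max_left _ _
  have hple1 : ∀ t i, p t i ≤ 1 := by
    intro t i
    have h := Finset.single_le_sum (f := fun i => p t i)
      (fun i _ => (hppos t i).le) (Finset.mem_univ i)
    rw [hpsum t] at h; exact h
  have hQb : ∀ t j, 0 < (∑ l, p t l * V l j) + f j := by
    intro t j
    have hnn : 0 ≤ ∑ l, p t l * V l j :=
      Finset.sum_nonneg fun l _ => mul_nonneg (hppos t l).le (hV0 l j)
    rcases hcol j with h | ⟨i, h⟩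
    · linarith
    · have h1 : 0 < p t i * V i j := mul_pos (hppos t i) h
      have h2 : p t i * V i j ≤ ∑ l, p t l * V l j :=
        Finset.single_le_sum (fun l _ => mul_nonneg (hppos t l).le (hV0 l j))
          (Finset.mem_univ i)
      linarith [hf0 j]
  have hrec' : ∀ t i, p (t + 1) i = max (r i) (α t * Real.exp (c i + ∑ j, V i j *
      Real.log (p t i * V i j / ((∑ l, p t l * V l j) + f j)))) := by
    intro t i
    rw [hrec t i]
    simp only [show ∀ j, f j + ∑ l, p t l * V l j = (∑ l, p t l * V l j) + f j from
      fun j => add_comm _ _]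
  have hstep : ∀ t (q : Fin m → ℝ), (∀ i, 0 ≤ q i) → (∀ i, r i ≤ q i) →
      (∑ i, q i = 1) →
      Ifun V f c q ≤ Ifun V f c (p (t + 1)) + Dkl q (p t) - Dkl q (p (t + 1)) :=
    fun t q hq0 hqr hqs =>
      step_ineq V hV0 hV1 f hf0 c r (hα t) (hppos t) (hpsum t) (hQb t)
        (hrec' t) (hsum t) hq0 hqr hqs
  have hmono : Monotone fun t => Ifun V f c (p t) := by
    apply monotone_nat_of_le_succ
    intro t
    show Ifun V f c (p t) ≤ Ifun V f c (p (t + 1))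
    have h := hstep t (p t) (fun i => (hppos t i).le) (hpr t) (hpsum t)
    have hD0 : Dkl (p t) (p t) = 0 := by unfold Dkl; simp
    have hD1 : 0 ≤ Dkl (p t) (p (t + 1)) :=
      Dkl_nonneg (fun i => (hppos t i).le) (hppos (t + 1))
        (by rw [hpsum, hpsum])
    rw [hD0] at h; linarith
  -- uniform bound on Dkl against p 0
  have hDbound : ∀ q : Fin m → ℝ, (∀ i, 0 ≤ q i) → (∑ i, q i = 1) →
      Dkl q (p 0) ≤ ∑ i, -Real.log (p 0 i) := by
    intro q hq0 hqs
    unfold Dkl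
    refine Finset.sum_le_sum fun i _ => ?_
    have hq1 : q i ≤ 1 := by
      have h := Finset.single_le_sum (f := q) (fun i _ => hq0 i) (Finset.mem_univ i)
      rw [hqs] at h; exact h
    have hlq : Real.log (q i) ≤ 0 := Real.log_nonpos (hq0 i) hq1
    have hlp : Real.log (p 0 i) ≤ 0 := Real.log_nonpos (hp0pos i).le (hple1 0 i)
    nlinarith [hq0 i]
  have hIub : ∀ q : Fin m → ℝ, (∀ i, 0 ≤ q i) → (∀ i, r i ≤ q i) → (∑ i, q i = 1) →
      Ifun V f c q ≤ Ifun V f c (p 1) + ∑ i, -Real.log (p 0 i) := by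
    intro q hq0 hqr hqs
    have h := hstep 0 q hq0 hqr hqs
    have hD1 : 0 ≤ Dkl q (p 1) :=
      Dkl_nonneg hq0 (hppos 1) (by rw [hqs, hpsum])
    have hD2 := hDbound q hq0 hqs
    linarith
  have hbdd : BddAbove (Set.range fun t => Ifun V f c (p t)) := by
    refine ⟨Ifun V f c (p 1) + ∑ i, -Real.log (p 0 i), ?_⟩
    rintro x ⟨t, rfl⟩
    exact hIub (p t) (fun i => (hppos t i).le) (hpr t) (hpsum t)
  have hLtend : Filter.Tendsto (fun t => Ifun V f c (p t)) Filter.atTop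
      (nhds (⨆ t, Ifun V f c (p t))) := tendsto_atTop_ciSup hmono hbdd
  have hIpleL : ∀ t, Ifun V f c (p t) ≤ ⨆ t, Ifun V f c (p t) :=
    fun t => le_ciSup hbdd t
  -- every admissible q has value at most L
  have hqleL : ∀ q : Fin m → ℝ, (∀ i, 0 ≤ q i) → (∀ i, r i ≤ q i) → (∑ i, q i = 1) →
      Ifun V f c q ≤ ⨆ t, Ifun V f c (p t) := by
    intro q hq0 hqr hqs
    by_contra hlt
    push_neg at hlt
    have hε : 0 < Ifun V f c q - ⨆ t, Ifun V f c (p t) := by linarith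
    obtain ⟨T, hT⟩ := exists_nat_gt (Dkl q (p 0) / (Ifun V f c q - ⨆ t, Ifun V f c (p t)))
    have htel : (T : ℝ) * Ifun V f c q ≤
        (∑ t ∈ Finset.range T, Ifun V f c (p (t + 1))) + (Dkl q (p 0) - Dkl q (p T)) := by
      have hsum1 : ∀ t ∈ Finset.range T, Ifun V f c q ≤
          Ifun V f c (p (t + 1)) + (Dkl q (p t) - Dkl q (p (t + 1))) := by
        intro t _
        have := hstep t q hq0 hqr hqs
        linarith
      have h := Finset.sum_le_sum hsum1
      rw [Finset.sum_const, Finset.card_range, nsmul_eq_mul] at h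
      rw [Finset.sum_add_distrib] at h
      have htele : ∑ t ∈ Finset.range T, (Dkl q (p t) - Dkl q (p (t + 1)))
          = Dkl q (p 0) - Dkl q (p T) := Finset.sum_range_sub' (fun t => Dkl q (p t)) T
      rw [htele] at h
      exact h
    have h2 : ∑ t ∈ Finset.range T, Ifun V f c (p (t + 1)) ≤
        (T : ℝ) * ⨆ t, Ifun V f c (p t) := by
      calc ∑ t ∈ Finset.range T, Ifun V f c (p (t + 1))
          ≤ ∑ _t ∈ Finset.range T, ⨆ t, Ifun V f c (p t) :=
            Finset.sum_le_sum fun t _ => hIpleL (t + 1)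
        _ = (T : ℝ) * ⨆ t, Ifun V f c (p t) := by
            rw [Finset.sum_const, Finset.card_range, nsmul_eq_mul]
    have h3 : 0 ≤ Dkl q (p T) := Dkl_nonneg hq0 (hppos T) (by rw [hqs, hpsum])
    have hT' : Dkl q (p 0) < (T : ℝ) * (Ifun V f c q - ⨆ t, Ifun V f c (p t)) := by
      rw [div_lt_iff₀ hε] at hT; linarith
    have hexp : (T : ℝ) * (Ifun V f c q - ⨆ t, Ifun V f c (p t)) =
        (T : ℝ) * Ifun V f c q - (T : ℝ) * ⨆ t, Ifun V f c (p t) := by ring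
    linarith [hexp ▸ hT']
  -- supremum identification
  have hmem : ∀ t, Ifun V f c (p t) ∈ {x : ℝ | ∃ q : Fin m → ℝ,
      (∀ i, 0 ≤ q i) ∧ (∀ i, r i ≤ q i) ∧ (∑ i, q i = 1) ∧ x = Ifun V f c q} :=
    fun t => ⟨p t, fun i => (hppos t i).le, hpr t, hpsum t, rfl⟩
  have hub : ∀ x ∈ {x : ℝ | ∃ q : Fin m → ℝ,
      (∀ i, 0 ≤ q i) ∧ (∀ i, r i ≤ q i) ∧ (∑ i, q i = 1) ∧ x = Ifun V f c q},
      x ≤ ⨆ t, Ifun V f c (p t) := by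
    rintro x ⟨q, hq0, hqr, hqs, rfl⟩
    exact hqleL q hq0 hqr hqs
  have hsup : sSup {x : ℝ | ∃ q : Fin m → ℝ,
      (∀ i, 0 ≤ q i) ∧ (∀ i, r i ≤ q i) ∧ (∑ i, q i = 1) ∧ x = Ifun V f c q}
      = ⨆ t, Ifun V f c (p t) :=
    le_antisymm (csSup_le ⟨_, hmem 0⟩ hub)
      (ciSup_le fun t => le_csSup ⟨_, hub⟩ (hmem t))
  -- compactness: a convergent subsequence
  have hmem01 : ∀ t, p t ∈ Set.Icc (0 : Fin m → ℝ) 1 :=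
    fun t => ⟨fun i => (hppos t i).le, fun i => hple1 t i⟩
  obtain ⟨phat, _hphatmem, φ, hφmono, hφtend⟩ :=
    (isCompact_Icc (a := (0 : Fin m → ℝ)) (b := 1)).tendsto_subseq hmem01
  have hcont := Ifun_continuous V f c
  have hIφ : Filter.Tendsto (fun k => Ifun V f c (p (φ k))) Filter.atTop
      (nhds (Ifun V f c phat)) := hcont.continuousAt.tendsto.comp hφtend
  have hIφ' : Filter.Tendsto (fun k => Ifun V f c (p (φ k))) Filter.atTop
      (nhds (⨆ t, Ifun V f c (p t))) := hLtend.comp hφmono.tendsto_atTop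
  have hIphat : Ifun V f c phat = ⨆ t, Ifun V f c (p t) :=
    tendsto_nhds_unique hIφ hIφ'
  have hcoord : ∀ i, Filter.Tendsto (fun k => p (φ k) i) Filter.atTop (nhds (phat i)) :=
    fun i => tendsto_pi_nhds.1 hφtend i
  have hphat0 : ∀ i, 0 ≤ phat i :=
    fun i => ge_of_tendsto' (hcoord i) fun k => (hppos _ i).le
  have hphatr : ∀ i, r i ≤ phat i :=
    fun i => ge_of_tendsto' (hcoord i) fun k => hpr _ i
  have hphatsum : ∑ i, phat i = 1 := by
    have h1 : Filter.Tendsto (fun k => ∑ i, p (φ k) i) Filter.atTop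
        (nhds (∑ i, phat i)) := tendsto_finset_sum _ fun i _ => hcoord i
    have h2 : (fun k => ∑ i, p (φ k) i) = fun _ => (1 : ℝ) :=
      funext fun k => hpsum _
    rw [h2] at h1
    exact tendsto_nhds_unique h1 tendsto_const_nhds
  -- the divergence to the accumulation point decreases to 0
  have hdanti : Antitone fun t => Dkl phat (p t) := by
    apply antitone_nat_of_succ_le
    intro t
    have h := hstep t phat hphat0 hphatr hphatsum
    rw [hIphat] at h
    have h2 := hIpleL (t + 1)
    show Dkl phat (p (t + 1)) ≤ Dkl phat (p t)
    linarith
  have hd0 : ∀ t, 0 ≤ Dkl phat (p t) :=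
    fun t => Dkl_nonneg hphat0 (hppos t) (by rw [hphatsum, hpsum])
  have hdφ : Filter.Tendsto (fun k => Dkl phat (p (φ k))) Filter.atTop (nhds 0) := by
    have h : Filter.Tendsto (fun k => ∑ i, phat i *
        (Real.log (phat i) - Real.log (p (φ k) i))) Filter.atTop
        (nhds (∑ _i : Fin m, (0 : ℝ))) := by
      apply tendsto_finset_sum
      intro i _
      rcases eq_or_lt_of_le (hphat0 i) with h0 | h0
      · have heq : (fun k => phat i * (Real.log (phat i) - Real.log (p (φ k) i)))
            = fun _ => (0 : ℝ) := by
          funext k; rw [← h0]; ring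
        rw [heq]
        exact tendsto_const_nhds
      · have hlog : Filter.Tendsto (fun k => Real.log (p (φ k) i)) Filter.atTop
            (nhds (Real.log (phat i))) :=
          ((Real.continuousAt_log (ne_of_gt h0)).tendsto).comp (hcoord i)
        have h2 : Filter.Tendsto (fun k => Real.log (phat i) - Real.log (p (φ k) i))
            Filter.atTop (nhds (Real.log (phat i) - Real.log (phat i))) :=
          tendsto_const_nhds.sub hlog
        have h3 := h2.const_mul (phat i)
        simpa using h3
    simpa [Dkl] using h
  have hdbdd : BddBelow (Set.range fun t => Dkl phat (p t)) := by
    refine ⟨0, ?_⟩; rintro x ⟨t, rfl⟩; exact hd0 t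
  have hdinf : Filter.Tendsto (fun t => Dkl phat (p t)) Filter.atTop
      (nhds (⨅ t, Dkl phat (p t))) := tendsto_atTop_ciInf hdanti hdbdd
  have hinf0 : (⨅ t, Dkl phat (p t)) = 0 :=
    tendsto_nhds_unique (hdinf.comp hφmono.tendsto_atTop) hdφ
  have hdtend : Filter.Tendsto (fun t => Dkl phat (p t)) Filter.atTop (nhds 0) :=
    hinf0 ▸ hdinf
  -- coordinatewise convergence of the full sequence
  have hcoordfull : ∀ i, Filter.Tendsto (fun t => p t i) Filter.atTop (nhds (phat i)) := by
    intro i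
    have hety : ∀ t (i' : Fin m), 0 ≤ phat i' * (Real.log (phat i') - Real.log (p t i'))
        - phat i' + p t i' := fun t i' => by
      linarith [gibbs_pt (hppos t i') (hphat0 i')]
    have hesum : ∀ t, phat i * (Real.log (phat i) - Real.log (p t i))
        - phat i + p t i ≤ Dkl phat (p t) := by
      intro t
      have hsum_e : ∑ i', (phat i' * (Real.log (phat i') - Real.log (p t i'))
          - phat i' + p t i') = Dkl phat (p t) := by
        rw [Finset.sum_add_distrib, Finset.sum_sub_distrib, hphatsum, hpsum t]
        unfold Dkl; ring
      have h := Finset.single_le_sum (f := fun i' =>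
          phat i' * (Real.log (phat i') - Real.log (p t i')) - phat i' + p t i')
        (fun i' _ => hety t i') (Finset.mem_univ i)
      rw [hsum_e] at h
      exact h
    have hetend : Filter.Tendsto (fun t => phat i * (Real.log (phat i) - Real.log (p t i))
        - phat i + p t i) Filter.atTop (nhds 0) :=
      tendsto_of_tendsto_of_tendsto_of_le_of_le tendsto_const_nhds hdtend
        (fun t => hety t i) (fun t => hesum t)
    rcases eq_or_lt_of_le (hphat0 i) with h0 | h0
    · have heq : (fun t => phat i * (Real.log (phat i) - Real.log (p t i))
          - phat i + p t i) = fun t => p t i := by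
        funext t; rw [← h0]; ring
      rw [heq] at hetend
      rw [← h0]
      exact hetend
    · rw [Metric.tendsto_atTop]
      intro ε hε
      set x := phat i with hx
      set mn := min ε (x / 2) with hmn
      have hmnpos : 0 < mn := lt_min hε (by linarith)
      have hmnx : mn ≤ x / 2 := min_le_right _ _
      have hy1 : 0 < x - mn := by linarith
      have hδ1 : 0 < x * (Real.log x - Real.log (x - mn)) - x + (x - mn) := by
        have h := gibbs_pt_strict (a := x - mn) (b := x) hy1 h0 (by linarith)
        linarith
      have hδ2 : 0 < x * (Real.log x - Real.log (x + mn)) - x + (x + mn) := by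
        have h := gibbs_pt_strict (a := x + mn) (b := x) (by linarith) h0 (by linarith)
        linarith
      obtain ⟨N, hN⟩ := (Metric.tendsto_atTop.1 hetend)
        (min (x * (Real.log x - Real.log (x - mn)) - x + (x - mn))
          (x * (Real.log x - Real.log (x + mn)) - x + (x + mn))) (lt_min hδ1 hδ2)
      refine ⟨N, fun t ht => ?_⟩
      have het := hN t ht
      rw [Real.dist_eq, sub_zero, abs_of_nonneg (hety t i)] at het
      rw [Real.dist_eq]
      by_contra habs
      push_neg at habs
      have habs' : mn ≤ |p t i - x| := le_trans (min_le_left _ _) habs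
      rcases le_abs.1 habs' with hcase | hcase
      · have hcr := core_right h0 (by linarith : x ≤ x + mn)
          (by linarith : x + mn ≤ p t i)
        have e1 : x * (Real.log x - Real.log (p t i))
            = x * Real.log x - x * Real.log (p t i) := mul_sub _ _ _
        have e2 : x * (Real.log x - Real.log (x + mn))
            = x * Real.log x - x * Real.log (x + mn) := mul_sub _ _ _
        have e3 : x * (Real.log (p t i) - Real.log (x + mn))
            = x * Real.log (p t i) - x * Real.log (x + mn) := mul_sub _ _ _
        have hminr := min_le_right
          (x * (Real.log x - Real.log (x - mn)) - x + (x - mn))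
          (x * (Real.log x - Real.log (x + mn)) - x + (x + mn))
        linarith
      · have hcl := core_left (hppos t i) (by linarith : p t i ≤ x - mn)
          (by linarith : x - mn ≤ x)
        have e1 : x * (Real.log x - Real.log (p t i))
            = x * Real.log x - x * Real.log (p t i) := mul_sub _ _ _
        have e2 : x * (Real.log x - Real.log (x - mn))
            = x * Real.log x - x * Real.log (x - mn) := mul_sub _ _ _
        have e3 : x * (Real.log (x - mn) - Real.log (p t i))
            = x * Real.log (x - mn) - x * Real.log (p t i) := mul_sub _ _ _
        have hminl := min_le_left
          (x * (Real.log x - Real.log (x - mn)) - x + (x - mn))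
          (x * (Real.log x - Real.log (x + mn)) - x + (x + mn))
        linarith
  have hplim : Filter.Tendsto p Filter.atTop (nhds phat) := tendsto_pi_nhds.2 hcoordfull
  refine ⟨⟨phat, hplim⟩, hmono, ?_⟩
  rw [hsup]
  exact hLtend
end

section
/- (Rate of convergence.) Let W̃ be an m×n row-stochastic matrix, f a nonnegative 1×n vector, and c ∈ ℝ^m. On the open set of p ∈ ℝ^m with all p_i > 0 and f_j + Σ_l p_l W̃_{lj} > 0 for all j, define Φ_{ji}(p) := p_i W̃_{ij}/(f_j + Σ_l p_l W̃_{lj}) for i = 1,…,m, Φ_{j0}(p) := f_j/(f_j + Σ_l p_l W̃_{lj}), and the map M with components M_i(p) := exp(c_i + Σ_j W̃_{ij} log Φ_{ji}(p)) / Σ_{l=1}^m exp(c_l + Σ_j W̃_{lj} log Φ_{jl}(p)), where terms with W̃_{ij} = 0 are omitted from the exponents. Suppose p* lies in this open set, Σ_i p*_i = 1, and M(p*) = p*. Then M is differentiable at p* and its partial derivatives satisfy ∂M_i/∂p_k evaluated at p* = δ_{ik} − Σ_{j=1}^n W̃_{kj}·(Φ_{ji}(p*) + p*_i·Φ_{j0}(p*));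 equivalently, the Jacobian matrix R(p*) with (k,i) entry ∂M_i/∂p_k(p*) equals I_m − W̃Ψ, where Ψ is the n×m matrix with entries Ψ_{ji} = Φ_{ji}(p*) + p*_i Φ_{j0}(p*). -/
open Finset

/-- The Arimoto–Blahut-type map `M`, with components
`M_i(p) = exp(c_i + ∑_j W̃_{ij} log Φ_{ji}(p)) / ∑_l exp(c_l + ∑_j W̃_{lj} log Φ_{jl}(p))`
where `Φ_{ji}(p) = p_i W̃_{ij}/(f_j + ∑_l p_l W̃_{lj})`.  Terms with `W̃_{ij} = 0`
vanish automatically since `Real.log 0 = 0`. -/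
noncomputable def ABmap {m n : ℕ} (Wt : Matrix (Fin m) (Fin n) ℝ)
    (f : Fin n → ℝ) (c : Fin m → ℝ) (p : Fin m → ℝ) : Fin m → ℝ := fun i =>
  Real.exp (c i + ∑ j, Wt i j *
      Real.log (p i * Wt i j / (f j + ∑ l, p l * Wt l j))) /
    ∑ l, Real.exp (c l + ∑ j, Wt l j *
      Real.log (p l * Wt l j / (f j + ∑ k, p k * Wt k j)))

private lemma AB_aux1 (S p X Y : ℝ) (hS : S ≠ 0) :
    (p * S) * (-(S ^ 2)⁻¹ * (S * Y)) + S⁻¹ * ((p * S) * X) = p * X - p * Y := by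
  field_simp
  ring

private lemma AB_aux2 (a s fj : ℝ) (h : fj + s ≠ 0) :
    a - s * ((fj + s)⁻¹ * a) = a * (fj * (fj + s)⁻¹) := by
  field_simp
  ring

/-- Theorem 2 (rate of convergence): at an interior fixed point `p*`, the map `M`
is differentiable and its Jacobian is `R(p*) = I_m − W̃Ψ`, i.e.
`∂M_i/∂p_k (p*) = δ_{ik} − ∑_j W̃_{kj}(Φ_{ji}(p*) + p*_i Φ_{j0}(p*))`. -/
theorem ABmap_jacobian {m n : ℕ} (Wt : Matrix (Fin m) (Fin n) ℝ)
    (hWt0 : ∀ i j, 0 ≤ Wt i j) (hWt1 : ∀ i, ∑ j, Wt i j = 1)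
    (f : Fin n → ℝ) (hf0 : ∀ j, 0 ≤ f j) (c : Fin m → ℝ)
    (pstar : Fin m → ℝ) (hpos : ∀ i, 0 < pstar i)
    (hden : ∀ j, 0 < f j + ∑ l, pstar l * Wt l j)
    (hsum : ∑ i, pstar i = 1)
    (hfix : ABmap Wt f c pstar = pstar) :
    DifferentiableAt ℝ (ABmap Wt f c) pstar ∧
    (∀ i k : Fin m,
      fderiv ℝ (ABmap Wt f c) pstar (Pi.single k 1) i =
        (if i = k then (1 : ℝ) else 0) - ∑ j, Wt k j *
          (pstar i * Wt i j / (f j + ∑ l, pstar l * Wt l j)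
            + pstar i * (f j / (f j + ∑ l, pstar l * Wt l j)))) ∧
    (Matrix.of fun k i : Fin m =>
        fderiv ℝ (ABmap Wt f c) pstar (Pi.single k 1) i)
      = 1 - Wt * Matrix.of (fun (j : Fin n) (i : Fin m) =>
          pstar i * Wt i j / (f j + ∑ l, pstar l * Wt l j)
            + pstar i * (f j / (f j + ∑ l, pstar l * Wt l j))) := by
  classical
  have hm : 0 < m := by
    rcases Nat.eq_zero_or_pos m with h | h
    · subst h; simp at hsum
    · exact h
  have hpne : ∀ i, pstar i ≠ 0 := fun i => (hpos i).ne'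
  have hAne : ∀ j, (f j + ∑ l, pstar l * Wt l j) ≠ 0 := fun j => (hden j).ne'
  -- the derivative of the (affine) denominator
  set Dd : Fin n → ((Fin m → ℝ) →L[ℝ] ℝ) :=
    fun j => ∑ l, Wt l j • (ContinuousLinearMap.proj l : (Fin m → ℝ) →L[ℝ] ℝ) with hDdDef
  have hDder : ∀ j, HasFDerivAt (fun p : Fin m → ℝ => f j + ∑ l, p l * Wt l j) (Dd j) pstar :=
    fun j =>
      (HasFDerivAt.fun_sum fun l _ => (hasFDerivAt_apply l pstar).mul_const (Wt l j)).const_add (f j)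
  -- the derivative of each summand in the exponent
  set Td : Fin m → Fin n → ((Fin m → ℝ) →L[ℝ] ℝ) := fun i j =>
    Wt i j • ((pstar i)⁻¹ • ContinuousLinearMap.proj i
      - (f j + ∑ l, pstar l * Wt l j)⁻¹ • Dd j) with hTdDef
  have hTder : ∀ i j, HasFDerivAt
      (fun p : Fin m → ℝ => Wt i j * Real.log (p i * Wt i j / (f j + ∑ l, p l * Wt l j)))
      (Td i j) pstar := by
    intro i j
    rcases (hWt0 i j).eq_or_lt with h0 | hW
    · have hfun : (fun p : Fin m → ℝ =>
          Wt i j * Real.log (p i * Wt i j / (f j + ∑ l, p l * Wt l j))) = fun _ => 0 := by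
        funext p; rw [← h0]; ring
      have hTd0 : Td i j = 0 := by rw [hTdDef]; simp [← h0]
      rw [hfun, hTd0]
      exact hasFDerivAt_const 0 pstar
    · have h1 : HasFDerivAt
          (fun p : Fin m → ℝ => Real.log (p i) + Real.log (Wt i j)
            - Real.log (f j + ∑ l, p l * Wt l j))
          ((pstar i)⁻¹ • ContinuousLinearMap.proj i
            - (f j + ∑ l, pstar l * Wt l j)⁻¹ • Dd j) pstar := by
        have hl1 : HasFDerivAt (fun p : Fin m → ℝ => Real.log (p i))
            ((pstar i)⁻¹ • (ContinuousLinearMap.proj i : (Fin m → ℝ) →L[ℝ] ℝ)) pstar :=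
          (hasFDerivAt_apply i pstar).log (hpne i)
        exact (hl1.add_const (Real.log (Wt i j))).sub ((hDder j).log (hAne j))
      have heq : (fun p : Fin m → ℝ => Real.log (p i * Wt i j / (f j + ∑ l, p l * Wt l j)))
          =ᶠ[nhds pstar] fun p => Real.log (p i) + Real.log (Wt i j)
            - Real.log (f j + ∑ l, p l * Wt l j) := by
        have h1' : ∀ᶠ p : Fin m → ℝ in nhds pstar, 0 < p i :=
          (isOpen_lt continuous_const (continuous_apply i)).mem_nhds (hpos i)
        have h2' : ∀ᶠ p : Fin m → ℝ in nhds pstar, 0 < f j + ∑ l, p l * Wt l j :=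
          (isOpen_lt continuous_const (by continuity)).mem_nhds (hden j)
        filter_upwards [h1', h2'] with p hp1 hp2
        rw [Real.log_div (by positivity) hp2.ne', Real.log_mul hp1.ne' hW.ne']
      exact (h1.congr_of_eventuallyEq heq).const_mul (Wt i j)
  -- the exponential factors
  set Gd : Fin m → ((Fin m → ℝ) →L[ℝ] ℝ) := fun i => ∑ j, Td i j with hGdDef
  set e : Fin m → ℝ := fun i => Real.exp (c i + ∑ j, Wt i j *
      Real.log (pstar i * Wt i j / (f j + ∑ l, pstar l * Wt l j))) with heDef
  have hEder : ∀ i, HasFDerivAt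
      (fun p : Fin m → ℝ => Real.exp (c i + ∑ j, Wt i j *
        Real.log (p i * Wt i j / (f j + ∑ l, p l * Wt l j))))
      (e i • Gd i) pstar := fun i =>
    ((HasFDerivAt.fun_sum fun j _ => hTder i j).const_add (c i)).exp
  set S : ℝ := ∑ l, e l with hSDef
  set Sd : (Fin m → ℝ) →L[ℝ] ℝ := ∑ l, e l • Gd l with hSdDef
  have hSder : HasFDerivAt (fun p : Fin m → ℝ => ∑ l, Real.exp (c l + ∑ j, Wt l j *
      Real.log (p l * Wt l j / (f j + ∑ k, p k * Wt k j)))) Sd pstar :=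
    HasFDerivAt.fun_sum fun l _ => hEder l
  have hSpos : 0 < S := Finset.sum_pos (fun l _ => Real.exp_pos _) ⟨⟨0, hm⟩, mem_univ _⟩
  have hSinv : HasFDerivAt (fun p : Fin m → ℝ => (∑ l, Real.exp (c l + ∑ j, Wt l j *
      Real.log (p l * Wt l j / (f j + ∑ k, p k * Wt k j))))⁻¹)
      ((-(S ^ 2)⁻¹) • Sd) pstar :=
    (hasDerivAt_inv hSpos.ne').comp_hasFDerivAt pstar hSder
  set Fd : Fin m → ((Fin m → ℝ) →L[ℝ] ℝ) :=
    fun i => e i • ((-(S ^ 2)⁻¹) • Sd) + S⁻¹ • (e i • Gd i) with hFdDef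
  have hMder : ∀ i, HasFDerivAt (fun p => ABmap Wt f c p i) (Fd i) pstar := by
    intro i
    have h := (hEder i).mul hSinv
    exact h.congr_of_eventuallyEq (Filter.Eventually.of_forall fun p => by
      simp only [ABmap, div_eq_mul_inv, Pi.mul_apply])
  have hF : HasFDerivAt (ABmap Wt f c) (ContinuousLinearMap.pi Fd) pstar :=
    hasFDerivAt_pi.2 hMder
  have hfd : fderiv ℝ (ABmap Wt f c) pstar = ContinuousLinearMap.pi Fd := hF.fderiv
  -- the fixed-point relation
  have hfixi : ∀ i, e i = pstar i * S := by
    intro i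
    have h := congrFun hfix i
    rw [show ABmap Wt f c pstar i = e i / S from rfl, div_eq_iff hSpos.ne'] at h
    rw [h]
  clear_value Dd Td Gd e S Sd Fd
  -- evaluations of the derivative linear maps at `Pi.single k 1`
  have key : ∀ i k : Fin m, Fd i (Pi.single k 1) =
      (if i = k then (1 : ℝ) else 0) - ∑ j, Wt k j *
        (pstar i * Wt i j / (f j + ∑ l, pstar l * Wt l j)
          + pstar i * (f j / (f j + ∑ l, pstar l * Wt l j))) := by
    intro i k
    have hDdv : ∀ j, Dd j (Pi.single k 1) = Wt k j := by
      intro j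
      simp [hDdDef, ContinuousLinearMap.sum_apply, Pi.single_apply, mul_ite,
        Finset.sum_ite_eq' (Finset.univ : Finset (Fin m)) k]
    have hTdv : ∀ i' j, Td i' j (Pi.single k 1)
        = Wt i' j * ((pstar i')⁻¹ * (if i' = k then 1 else 0)
          - (f j + ∑ l, pstar l * Wt l j)⁻¹ * Wt k j) := by
      intro i' j
      simp [hTdDef, hDdv j, Pi.single_apply]
    have hGv : ∀ i', Gd i' (Pi.single k 1)
        = (if i' = k then (pstar i')⁻¹ else 0)
          - ∑ j, Wt i' j * ((f j + ∑ l, pstar l * Wt l j)⁻¹ * Wt k j) := by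
      intro i'
      rw [hGdDef]
      rw [ContinuousLinearMap.sum_apply]
      rw [Finset.sum_congr rfl fun j _ => hTdv i' j]
      simp only [mul_sub, Finset.sum_sub_distrib, mul_ite, mul_one, mul_zero]
      congr 1
      rcases eq_or_ne i' k with h | h
      · simp only [if_pos h, ← Finset.sum_mul, hWt1 i', one_mul]
      · simp only [if_neg h, Finset.sum_const_zero]
    have hPG : ∑ l, pstar l * Gd l (Pi.single k 1)
        = 1 - ∑ j, (∑ l, pstar l * Wt l j) *
            ((f j + ∑ l, pstar l * Wt l j)⁻¹ * Wt k j) := by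
      simp only [hGv]
      simp only [mul_sub]
      rw [Finset.sum_sub_distrib]
      congr 1
      · simp [mul_ite, Finset.sum_ite_eq' (Finset.univ : Finset (Fin m)) k,
          mul_inv_cancel₀ (hpne k)]
      · simp only [Finset.mul_sum]
        rw [Finset.sum_comm]
        refine Finset.sum_congr rfl fun j _ => ?_
        simp only [← mul_assoc]
        rw [← Finset.sum_mul, ← Finset.sum_mul]
    have hPG2 : ∑ l, pstar l * Gd l (Pi.single k 1)
        = ∑ j, Wt k j * (f j * (f j + ∑ l, pstar l * Wt l j)⁻¹) := by
      rw [hPG, show (1 : ℝ) = ∑ j, Wt k j from (hWt1 k).symm, ← Finset.sum_sub_distrib]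
      exact Finset.sum_congr rfl fun j _ => AB_aux2 _ _ _ (hAne j)
    have hSdv : Sd (Pi.single k 1) = ∑ l, e l * Gd l (Pi.single k 1) := by
      rw [hSdDef]
      simp [ContinuousLinearMap.sum_apply]
    rw [hFdDef]
    simp only [ContinuousLinearMap.add_apply, ContinuousLinearMap.smul_apply,
      smul_eq_mul, hSdv]
    simp only [hfixi]
    have hfactor : ∑ l, (pstar l * S) * Gd l (Pi.single k 1)
        = S * ∑ l, pstar l * Gd l (Pi.single k 1) := by
      rw [Finset.mul_sum]
      exact Finset.sum_congr rfl fun l _ => by ring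
    rw [hfactor, hPG2, hGv i]
    rw [AB_aux1 S (pstar i) _ _ hSpos.ne']
    rw [mul_sub]
    have hdel : pstar i * (if i = k then (pstar i)⁻¹ else 0) = if i = k then 1 else 0 := by
      split_ifs <;> simp [mul_inv_cancel₀ (hpne i)]
    rw [hdel, sub_sub]
    congr 1
    rw [Finset.mul_sum, Finset.mul_sum, ← Finset.sum_add_distrib]
    refine Finset.sum_congr rfl fun j _ => ?_
    rw [div_eq_mul_inv, div_eq_mul_inv]
    ring
  refine ⟨hF.differentiableAt, ?_, ?_⟩
  · intro i k
    rw [hfd]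
    simpa using key i k
  · ext k i
    simp only [Matrix.of_apply, Matrix.sub_apply, Matrix.one_apply, Matrix.mul_apply]
    rw [hfd]
    simpa [eq_comm] using key i k
end

section
/- Let W* be an m×n row-stochastic matrix and f a nonnegative 1×n vector with f_+ := Σ_j f_j, such that W̃ := (1+f_+)·W* − 1_m f is entrywise nonnegative, where 1_m is the m×1 all-ones vector. Let p* ∈ ℝ^m have nonnegative entries with Σ_i p*_i = 1, and suppose s := p*W* has all entries positive. Let D_s and D_{p*} be the diagonal matrices with diagonals s and p*, and Ψ := D_s^{-1}(W*)^T D_{p*}. Then W̃Ψ is a row-stochastic m×m matrix; in particular (I_m − W̃Ψ)·1_m = 0. -/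
open Finset Matrix

/-- With `Ψ = D_s⁻¹ (W*)ᵀ D_{p*}` and `W̃ = (1+f₊)W* − 1ₘ f ≥ 0`, the matrix `W̃Ψ`
is row-stochastic; in particular `(I_m − W̃Ψ)·1ₘ = 0`. -/
theorem WtPsi_row_stochastic {m n : ℕ}
    (Wstar : Matrix (Fin m) (Fin n) ℝ)
    (hW0 : ∀ i j, 0 ≤ Wstar i j) (hW1 : ∀ i, ∑ j, Wstar i j = 1)
    (f : Fin n → ℝ) (hf0 : ∀ j, 0 ≤ f j)
    (Wt : Matrix (Fin m) (Fin n) ℝ)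
    (hWt : Wt = (1 + ∑ j, f j) • Wstar - Matrix.of fun (_ : Fin m) j => f j)
    (hWtpos : ∀ i j, 0 ≤ Wt i j)
    (pstar : Fin m → ℝ) (hp0 : ∀ i, 0 ≤ pstar i) (hp1 : ∑ i, pstar i = 1)
    (s : Fin n → ℝ) (hs : ∀ j, s j = ∑ i, pstar i * Wstar i j)
    (hspos : ∀ j, 0 < s j)
    (Ψ : Matrix (Fin n) (Fin m) ℝ)
    (hΨ : Ψ = Matrix.diagonal (fun j => (s j)⁻¹) * Wstarᵀ * Matrix.diagonal pstar) :
    (∀ i k, 0 ≤ (Wt * Ψ) i k) ∧ (∀ i, ∑ k, (Wt * Ψ) i k = 1) ∧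
      (1 - Wt * Ψ) *ᵥ (fun _ => (1 : ℝ)) = 0 := by
  have hΨent : ∀ j k, Ψ j k = (s j)⁻¹ * Wstar k j * pstar k := by
    intro j k
    simp [hΨ, Matrix.mul_apply, Matrix.diagonal, Finset.sum_ite_eq',
      Finset.sum_ite_eq, mul_comm]
  have hΨ0 : ∀ j k, 0 ≤ Ψ j k := by
    intro j k
    rw [hΨent]
    exact mul_nonneg (mul_nonneg (inv_nonneg.2 (hspos j).le) (hW0 k j)) (hp0 k)
  have hΨrow : ∀ j, ∑ k, Ψ j k = 1 := by
    intro j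
    have : ∑ k, Ψ j k = (s j)⁻¹ * ∑ k, pstar k * Wstar k j := by
      rw [Finset.mul_sum]
      refine Finset.sum_congr rfl fun k _ => ?_
      rw [hΨent]; ring
    rw [this, ← hs j, inv_mul_cancel₀ (hspos j).ne']
  have hWtrow : ∀ i, ∑ j, Wt i j = 1 := by
    intro i
    simp only [hWt, Matrix.sub_apply, Matrix.smul_apply, Matrix.of_apply,
      smul_eq_mul, Finset.sum_sub_distrib, ← Finset.mul_sum, hW1]
    ring
  have h0 : ∀ i k, 0 ≤ (Wt * Ψ) i k := by
    intro i k
    rw [Matrix.mul_apply]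
    exact Finset.sum_nonneg fun j _ => mul_nonneg (hWtpos i j) (hΨ0 j k)
  have h1 : ∀ i, ∑ k, (Wt * Ψ) i k = 1 := by
    intro i
    simp only [Matrix.mul_apply]
    rw [Finset.sum_comm]
    calc ∑ j, ∑ k, Wt i j * Ψ j k = ∑ j, Wt i j * ∑ k, Ψ j k := by
          simp [Finset.mul_sum]
      _ = 1 := by simp [hΨrow, hWtrow]
  refine ⟨h0, h1, ?_⟩
  funext i
  simp only [Matrix.mulVec, dotProduct, Matrix.sub_apply, Matrix.one_apply,
    mul_one, Pi.zero_apply, Finset.sum_sub_distrib]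
  rw [h1]
  simp
end

section
/- Let W* be an m×n row-stochastic matrix, let p* ∈ ℝ^m have all entries positive with Σ_i p*_i = 1, and suppose s := p*W* has all entries positive. Let D_s and D_{p*} be the diagonal matrices with diagonals s and p*. Then the m×m matrix I_m − W* D_s^{-1} (W*)^T D_{p*} is diagonalizable over ℝ: it is similar to a real symmetric matrix, and in particular all of its eigenvalues are real. -/
open Finset Matrix

open scoped Matrix.Norms.L2Operator in
noncomputable instance auxCStar (m : ℕ) : CStarAlgebra (Matrix (Fin m) (Fin m) ℂ) := {}

lemma aux_im_eq_zero {m : ℕ} {M : Matrix (Fin m) (Fin m) ℂ}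
    (hM : IsSelfAdjoint M) {d : ℂ} (hd : d ∈ spectrum ℂ M) : d.im = 0 :=
  IsSelfAdjoint.im_eq_zero_of_mem_spectrum (A := Matrix (Fin m) (Fin m) ℂ) hM hd

/-- `I_m − W* D_s⁻¹ (W*)ᵀ D_{p*}` is similar (over ℝ) to a real symmetric matrix;
in particular all its (complex) eigenvalues are real. -/
theorem rate_matrix_diagonalizable {m n : ℕ}
    (Wstar : Matrix (Fin m) (Fin n) ℝ)
    (hW0 : ∀ i j, 0 ≤ Wstar i j) (hW1 : ∀ i, ∑ j, Wstar i j = 1)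
    (pstar : Fin m → ℝ) (hp : ∀ i, 0 < pstar i) (hp1 : ∑ i, pstar i = 1)
    (s : Fin n → ℝ) (hs : ∀ j, s j = ∑ i, pstar i * Wstar i j)
    (hspos : ∀ j, 0 < s j)
    (A : Matrix (Fin m) (Fin m) ℝ)
    (hA : A = 1 - Wstar * Matrix.diagonal (fun j => (s j)⁻¹) * Wstarᵀ *
      Matrix.diagonal pstar) :
    (∃ P : Matrix (Fin m) (Fin m) ℝ, IsUnit P.det ∧ (P * A * P⁻¹).IsSymm) ∧
    (∀ d : ℂ, d ∈ spectrum ℂ (A.map (fun x : ℝ => (x : ℂ))) → d.im = 0) := by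
  set q : Fin m → ℝ := fun i => Real.sqrt (pstar i) with hqdef
  have hq : ∀ i, 0 < q i := fun i => Real.sqrt_pos.mpr (hp i)
  have hqq : ∀ i, q i * q i = pstar i := fun i => Real.mul_self_sqrt (hp i).le
  set P : Matrix (Fin m) (Fin m) ℝ := diagonal q with hPdef
  have hPdet : IsUnit P.det := by
    rw [hPdef, det_diagonal]
    exact isUnit_iff_ne_zero.mpr (Finset.prod_ne_zero_iff.mpr fun i _ => (hq i).ne')
  have hPinv : P⁻¹ = diagonal (fun i => (q i)⁻¹) := by
    apply inv_eq_right_inv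
    rw [hPdef, diagonal_mul_diagonal]
    have h : (fun i => q i * (q i)⁻¹) = fun _ => 1 :=
      funext fun i => mul_inv_cancel₀ (hq i).ne'
    rw [h, diagonal_one]
  have hdp : diagonal pstar * diagonal (fun i => (q i)⁻¹) = diagonal q := by
    have h : (fun i => pstar i * (q i)⁻¹) = q := by
      funext i
      rw [← hqq i, mul_inv_cancel_right₀ (hq i).ne']
    rw [diagonal_mul_diagonal, h]
  have hPP : P * P⁻¹ = 1 := mul_nonsing_inv P hPdet
  have key : P * A * P⁻¹ =
      1 - (P * Wstar) * diagonal (fun j => (s j)⁻¹) * (P * Wstar)ᵀ := by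
    rw [hA, mul_sub, sub_mul, mul_one, hPP]
    congr 1
    rw [hPinv]
    rw [transpose_mul, hPdef, diagonal_transpose]
    simp only [Matrix.mul_assoc]
    rw [hdp]
  have hsym : ∀ (B : Matrix (Fin m) (Fin n) ℝ) (dvec : Fin n → ℝ),
      (1 - (B * diagonal dvec) * Bᵀ).IsSymm := by
    intro B dvec
    unfold Matrix.IsSymm
    rw [transpose_sub, transpose_one, transpose_mul, transpose_mul, transpose_transpose,
      diagonal_transpose, Matrix.mul_assoc]
  have hSsymm : (P * A * P⁻¹).IsSymm := by
    rw [key]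
    have := hsym (P * Wstar) (fun j => (s j)⁻¹)
    rwa [Matrix.mul_assoc] at this ⊢
  refine ⟨⟨P, hPdet, hSsymm⟩, ?_⟩
  intro d hd
  set S : Matrix (Fin m) (Fin m) ℝ := P * A * P⁻¹ with hSdef
  set f : ℝ →+* ℂ := Complex.ofRealHom with hfdef
  have hmap : ∀ (M N : Matrix (Fin m) (Fin m) ℝ), (M * N).map f = M.map f * N.map f :=
    fun M N => by ext i j; simp [Matrix.map_apply, Matrix.mul_apply, f]
  have hmap1 : (1 : Matrix (Fin m) (Fin m) ℝ).map f = 1 := by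
    ext i j; simp [Matrix.map_apply, Matrix.one_apply, apply_ite f]
  set Pc : Matrix (Fin m) (Fin m) ℂ := P.map f with hPcdef
  set Pci : Matrix (Fin m) (Fin m) ℂ := P⁻¹.map f with hPcidef
  have hPc1 : Pc * Pci = 1 := by rw [hPcdef, hPcidef, ← hmap, hPP, hmap1]
  have hPc2 : Pci * Pc = 1 := by
    rw [hPcdef, hPcidef, ← hmap, nonsing_inv_mul P hPdet, hmap1]
  set u : (Matrix (Fin m) (Fin m) ℂ)ˣ := ⟨Pc, Pci, hPc1, hPc2⟩ with hudef
  have hAP : A = P⁻¹ * S * P := by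
    have h1 : S * P = P * A := nonsing_inv_mul_cancel_right P (P * A) hPdet
    rw [Matrix.mul_assoc, h1, ← Matrix.mul_assoc, nonsing_inv_mul P hPdet, one_mul]
  have hAconj : A.map (fun x : ℝ => (x : ℂ)) =
      ((u⁻¹ : (Matrix (Fin m) (Fin m) ℂ)ˣ) : Matrix (Fin m) (Fin m) ℂ) * (S.map f) *
        ((u : (Matrix (Fin m) (Fin m) ℂ)ˣ) : Matrix (Fin m) (Fin m) ℂ) := by
    calc A.map (fun x : ℝ => (x : ℂ)) = (P⁻¹ * S * P).map f := by rw [← hAP]; rfl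
      _ = Pci * (S.map f) * Pc := by rw [hmap, hmap]
      _ = _ := rfl
  have hspec : d ∈ spectrum ℂ (S.map f) := by
    rw [hAconj] at hd
    rwa [spectrum.units_conjugate'] at hd
  have hSA : (S.map f).IsHermitian := by
    ext i j
    have := congrFun (congrFun hSsymm i) j
    simp only [Matrix.transpose_apply] at this
    simp [Matrix.conjTranspose_apply, Matrix.map_apply, f, Complex.conj_ofReal, this]
  exact aux_im_eq_zero (hSA.isSelfAdjoint) hspec
end

section
/- Let W* be an m×n row-stochastic matrix and f a nonnegative 1×n vector with f_+ := Σ_j f_j, such that W̃ := (1+f_+)·W* − 1_m f is entrywise nonnegative, where 1_m is the m×1 all-ones vector. Let p* ∈ ℝ^m have all entries positive with Σ_i p*_i = 1, and suppose s := p*W* has all entries positive. Let D_s and D_{p*} be the diagonal matrices with diagonals s and p*, and Ψ := D_s^{-1}(W*)^T D_{p*}. Then every complex eigenvalue d of the m×m matrix I_m − W̃Ψ is real and satisfies 0 ≤ d ≤ 1. -/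
open Finset Matrix

/-- Proposition 3: every complex eigenvalue `d` of `I_m − W̃Ψ`, where
`Ψ = D_s⁻¹ (W*)ᵀ D_{p*}` and `W̃ = (1+f₊)W* − 1ₘ f ≥ 0`, is real with `0 ≤ d ≤ 1`. -/
theorem rate_matrix_eigenvalues_in_unit_interval {m n : ℕ}
    (Wstar : Matrix (Fin m) (Fin n) ℝ)
    (hW0 : ∀ i j, 0 ≤ Wstar i j) (hW1 : ∀ i, ∑ j, Wstar i j = 1)
    (f : Fin n → ℝ) (hf0 : ∀ j, 0 ≤ f j)
    (Wt : Matrix (Fin m) (Fin n) ℝ)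
    (hWt : Wt = (1 + ∑ j, f j) • Wstar - Matrix.of fun (_ : Fin m) j => f j)
    (hWtpos : ∀ i j, 0 ≤ Wt i j)
    (pstar : Fin m → ℝ) (hp : ∀ i, 0 < pstar i) (hp1 : ∑ i, pstar i = 1)
    (s : Fin n → ℝ) (hs : ∀ j, s j = ∑ i, pstar i * Wstar i j)
    (hspos : ∀ j, 0 < s j)
    (Ψ : Matrix (Fin n) (Fin m) ℝ)
    (hΨ : Ψ = Matrix.diagonal (fun j => (s j)⁻¹) * Wstarᵀ * Matrix.diagonal pstar) :
    ∀ d : ℂ, d ∈ spectrum ℂ ((1 - Wt * Ψ).map (fun x : ℝ => (x : ℂ))) →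
      d.im = 0 ∧ 0 ≤ d.re ∧ d.re ≤ 1 := by
  intro d hd
  set F : ℝ := ∑ j, f j with hF
  have hF0 : 0 ≤ F := Finset.sum_nonneg fun j _ => hf0 j
  -- entrywise formulas
  have hΨe : ∀ j k, Ψ j k = (s j)⁻¹ * (Wstar k j * pstar k) := by
    intro j k
    rw [hΨ]
    simp [Matrix.mul_assoc, Matrix.diagonal_mul, Matrix.mul_diagonal,
      Matrix.transpose_apply, mul_assoc]
  have hΨ0 : ∀ j k, 0 ≤ Ψ j k := by
    intro j k
    rw [hΨe]
    exact mul_nonneg (inv_nonneg.mpr (hspos j).le) (mul_nonneg (hW0 k j) (hp k).le)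
  have hΨ1 : ∀ j, ∑ k, Ψ j k = 1 := by
    intro j
    have h : ∑ k, Ψ j k = (s j)⁻¹ * ∑ k, pstar k * Wstar k j := by
      rw [Finset.mul_sum]
      exact Finset.sum_congr rfl fun k _ => by rw [hΨe]; ring
    rw [h, ← hs j, inv_mul_cancel₀ (hspos j).ne']
  have hWte : ∀ i j, Wt i j = (1 + F) * Wstar i j - f j := by
    intro i j
    rw [hWt]
    simp [Matrix.sub_apply, Matrix.smul_apply, smul_eq_mul]
  have hWt1 : ∀ i, ∑ j, Wt i j = 1 := by
    intro i
    have h : ∑ j, Wt i j = (1 + F) * (∑ j, Wstar i j) - F := by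
      rw [Finset.mul_sum, ← Finset.sum_sub_distrib]
      exact Finset.sum_congr rfl fun j _ => by rw [hWte]
    rw [h, hW1 i]; ring
  set A : Matrix (Fin m) (Fin m) ℝ := Wt * Ψ with hA
  have hA0 : ∀ i k, 0 ≤ A i k := by
    intro i k
    rw [hA, Matrix.mul_apply]
    exact Finset.sum_nonneg fun j _ => mul_nonneg (hWtpos i j) (hΨ0 j k)
  have hA1 : ∀ i, ∑ k, A i k = 1 := by
    intro i
    have h : ∑ k, A i k = ∑ j, Wt i j * ∑ k, Ψ j k := by
      simp only [hA, Matrix.mul_apply, Finset.mul_sum]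
      exact Finset.sum_comm
    rw [h]
    simp only [hΨ1, mul_one]
    exact hWt1 i
  set A' : Matrix (Fin m) (Fin m) ℂ := A.map (fun x : ℝ => (x : ℂ)) with hA'
  set lc : ℂ := 1 - d with hlc
  -- reduce spectrum membership to determinant
  have hmap : ((1 - A).map (fun x : ℝ => (x : ℂ))) = 1 - A' := by
    ext i j
    simp [hA', Matrix.map_apply, Matrix.sub_apply, Matrix.one_apply,
      apply_ite (fun x : ℝ => (x : ℂ))]
  rw [hmap] at hd
  have hnu : ¬ IsUnit (algebraMap ℂ (Matrix (Fin m) (Fin m) ℂ) lc - A') := by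
    rw [spectrum.mem_iff] at hd
    intro hu
    apply hd
    have h : (algebraMap ℂ (Matrix (Fin m) (Fin m) ℂ)) d - (1 - A')
        = -((algebraMap ℂ (Matrix (Fin m) (Fin m) ℂ)) lc - A') := by
      rw [hlc, map_sub, _root_.map_one]
      abel
    rw [h]
    exact hu.neg
  have hdet : (algebraMap ℂ (Matrix (Fin m) (Fin m) ℂ) lc - A').det = 0 := by
    by_contra hne
    exact hnu ((Matrix.isUnit_iff_isUnit_det _).mpr (isUnit_iff_ne_zero.mpr hne))
  -- right eigenvector
  obtain ⟨v, hv0, hv⟩ := (Matrix.exists_mulVec_eq_zero_iff.mpr hdet)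
  have hve : ∀ i, lc * v i = ∑ j, A' i j * v j := by
    intro i
    have h := congrFun hv i
    simp [Matrix.mulVec, dotProduct, Matrix.sub_apply, Matrix.algebraMap_matrix_apply,
      sub_mul, Finset.sum_sub_distrib, ite_mul, Finset.sum_ite_eq, sub_eq_zero] at h
    simpa using h
  -- |lc| ≤ 1
  have habs : ‖lc‖ ≤ 1 := by
    obtain ⟨i1, hvi1⟩ := Function.ne_iff.mp hv0
    obtain ⟨i0, -, hi0⟩ := Finset.exists_max_image Finset.univ
      (fun i => ‖v i‖) ⟨i1, Finset.mem_univ i1⟩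
    have hvi0pos : 0 < ‖v i0‖ :=
      lt_of_lt_of_le (by simpa using hvi1) (hi0 i1 (Finset.mem_univ i1))
    have key : ‖lc‖ * ‖v i0‖ ≤ 1 * ‖v i0‖ := by
      rw [← norm_mul, hve i0, one_mul]
      calc ‖∑ j, A' i0 j * v j‖
          ≤ ∑ j, ‖A' i0 j * v j‖ := norm_sum_le _ _
        _ = ∑ j, A i0 j * ‖v j‖ := by
            refine Finset.sum_congr rfl fun j _ => ?_
            rw [norm_mul]
            simp [hA', Matrix.map_apply, Complex.norm_real, Real.norm_eq_abs, abs_of_nonneg (hA0 i0 j)]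
        _ ≤ ∑ j, A i0 j * ‖v i0‖ :=
            Finset.sum_le_sum fun j _ =>
              mul_le_mul_of_nonneg_left (hi0 j (Finset.mem_univ j)) (hA0 i0 j)
        _ = ‖v i0‖ := by rw [← Finset.sum_mul, hA1 i0, one_mul]
    exact le_of_mul_le_mul_right key hvi0pos
  -- left eigenvector
  obtain ⟨x, hx0, hx⟩ := (Matrix.exists_vecMul_eq_zero_iff.mpr hdet)
  have hxe : ∀ k, lc * x k = ∑ i, x i * A' i k := by
    intro k
    have h := congrFun hx k
    simp [Matrix.vecMul, dotProduct, Matrix.sub_apply, Matrix.algebraMap_matrix_apply,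
      mul_sub, Finset.sum_sub_distrib, mul_ite, Finset.sum_ite_eq', sub_eq_zero, mul_comm] at h
    simpa [mul_comm] using h
  -- (lc - 1) * ∑ x = 0
  have hsum : (lc - 1) * (∑ i, x i) = 0 := by
    have h1 : ∑ k, (lc * x k) = ∑ k, ∑ i, x i * A' i k :=
      Finset.sum_congr rfl fun k _ => hxe k
    rw [← Finset.mul_sum, Finset.sum_comm] at h1
    have h2 : ∀ i, ∑ k, x i * A' i k = x i := by
      intro i
      rw [← Finset.mul_sum]
      have h3 : ∑ k, A' i k = 1 := by
        simp only [hA', Matrix.map_apply]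
        rw [← Complex.ofReal_sum, hA1 i, Complex.ofReal_one]
      rw [h3, mul_one]
    simp only [h2] at h1
    rw [sub_mul, h1, one_mul, sub_self]
  rcases mul_eq_zero.mp hsum with hcase | hxsum
  · -- lc = 1, so d = 0
    have hd0 : d = 0 := by
      have h : lc = 1 := by rwa [sub_eq_zero] at hcase
      rw [hlc] at h
      linear_combination -h
    simp [hd0]
  · -- ∑ x = 0 : lc is real and nonnegative
    set g : Fin n → ℂ := fun j => ∑ i, x i * (Wstar i j : ℂ) with hg
    have hgj : ∀ j, g j = ∑ i, x i * (Wstar i j : ℂ) := fun j => by rw [hg]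
    set Q : ℝ := ∑ k, Complex.normSq (x k) * (pstar k)⁻¹ with hQ
    set R : ℝ := ∑ j, Complex.normSq (g j) * (s j)⁻¹ with hR
    have hQpos : 0 < Q := by
      obtain ⟨k1, hk1⟩ := Function.ne_iff.mp hx0
      have hterm : 0 < Complex.normSq (x k1) * (pstar k1)⁻¹ :=
        mul_pos (Complex.normSq_pos.mpr hk1) (inv_pos.mpr (hp k1))
      exact lt_of_lt_of_le hterm (Finset.single_le_sum (fun k _ =>
        mul_nonneg (Complex.normSq_nonneg _) (inv_nonneg.mpr (hp k).le)) (Finset.mem_univ k1))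
    have hR0 : 0 ≤ R :=
      Finset.sum_nonneg fun j _ =>
        mul_nonneg (Complex.normSq_nonneg _) (inv_nonneg.mpr (hspos j).le)
    -- key per-k identity
    have hkey : ∀ k, lc * x k
        = (1 + (F : ℂ)) * (pstar k : ℂ) * ∑ j, g j * ((s j : ℂ))⁻¹ * (Wstar k j : ℂ) := by
      intro k
      rw [hxe k]
      have hAe : ∀ i, x i * A' i k
          = ∑ j, x i * (((1 + (F : ℂ)) * (Wstar i j : ℂ) - (f j : ℂ)) *
              (((s j : ℂ))⁻¹ * ((Wstar k j : ℂ) * (pstar k : ℂ)))) := by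
        intro i
        simp only [hA', Matrix.map_apply, hA, Matrix.mul_apply]
        push_cast
        rw [Finset.mul_sum]
        refine Finset.sum_congr rfl fun j _ => ?_
        rw [hWte i j, hΨe j k]
        push_cast
        ring
      calc ∑ i, x i * A' i k
          = ∑ j, ∑ i, x i * (((1 + (F : ℂ)) * (Wstar i j : ℂ) - (f j : ℂ)) *
              (((s j : ℂ))⁻¹ * ((Wstar k j : ℂ) * (pstar k : ℂ)))) := by
            simp only [hAe]
            exact Finset.sum_comm
        _ = ∑ j, ((1 + (F : ℂ)) * g j - (f j : ℂ) * (∑ i, x i)) *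
              (((s j : ℂ))⁻¹ * ((Wstar k j : ℂ) * (pstar k : ℂ))) := by
            refine Finset.sum_congr rfl fun j _ => ?_
            simp only [sub_mul, hgj j, Finset.mul_sum, Finset.sum_mul, ← Finset.sum_sub_distrib]
            exact Finset.sum_congr rfl fun i _ => by ring
        _ = (1 + (F : ℂ)) * (pstar k : ℂ) * ∑ j, g j * ((s j : ℂ))⁻¹ * (Wstar k j : ℂ) := by
            rw [hxsum, Finset.mul_sum]
            exact Finset.sum_congr rfl fun j _ => by ring
    have hconjg : ∀ j, (starRingEnd ℂ) (g j) = ∑ k, (Wstar k j : ℂ) * (starRingEnd ℂ) (x k) := by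
      intro j
      rw [hgj j, map_sum]
      exact Finset.sum_congr rfl fun k _ => by
        rw [_root_.map_mul, Complex.conj_ofReal]; ring
    have hmain : lc * (Q : ℂ) = (((1 + F) * R : ℝ) : ℂ) := by
      have e1 : lc * (Q : ℂ) = ∑ k, (lc * x k) * (starRingEnd ℂ) (x k) * ((pstar k : ℂ))⁻¹ := by
        rw [hQ]
        push_cast
        rw [Finset.mul_sum]
        refine Finset.sum_congr rfl fun k _ => ?_
        rw [← Complex.mul_conj]
        ring
      rw [e1]
      have e2 : ∀ k, (lc * x k) * (starRingEnd ℂ) (x k) * ((pstar k : ℂ))⁻¹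
          = (1 + (F : ℂ)) * ((∑ j, g j * ((s j : ℂ))⁻¹ * (Wstar k j : ℂ)) *
              (starRingEnd ℂ) (x k)) := by
        intro k
        rw [hkey k]
        have hpk : (pstar k : ℂ) ≠ 0 := by exact_mod_cast (hp k).ne'
        field_simp
      simp only [e2]
      rw [← Finset.mul_sum]
      have e3 : ∑ k, (∑ j, g j * ((s j : ℂ))⁻¹ * (Wstar k j : ℂ)) * (starRingEnd ℂ) (x k)
          = ∑ j, g j * (starRingEnd ℂ) (g j) * ((s j : ℂ))⁻¹ := by
        calc ∑ k, (∑ j, g j * ((s j : ℂ))⁻¹ * (Wstar k j : ℂ)) * (starRingEnd ℂ) (x k)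
            = ∑ k, ∑ j, g j * ((s j : ℂ))⁻¹ * ((Wstar k j : ℂ) * (starRingEnd ℂ) (x k)) := by
              refine Finset.sum_congr rfl fun k _ => ?_
              rw [Finset.sum_mul]
              exact Finset.sum_congr rfl fun j _ => by ring
          _ = ∑ j, ∑ k, g j * ((s j : ℂ))⁻¹ * ((Wstar k j : ℂ) * (starRingEnd ℂ) (x k)) :=
              Finset.sum_comm
          _ = ∑ j, g j * (starRingEnd ℂ) (g j) * ((s j : ℂ))⁻¹ := by
              refine Finset.sum_congr rfl fun j _ => ?_
              rw [← Finset.mul_sum, hconjg j]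
              ring
      rw [e3, hR]
      push_cast
      rw [Finset.mul_sum, Finset.mul_sum]
      refine Finset.sum_congr rfl fun j _ => ?_
      rw [← Complex.mul_conj]
    have hQne : (Q : ℂ) ≠ 0 := by exact_mod_cast hQpos.ne'
    have hlcval : lc = (((1 + F) * R / Q : ℝ) : ℂ) := by
      push_cast
      rw [eq_div_iff hQne]
      push_cast at hmain
      exact hmain
    have him : lc.im = 0 := by rw [hlcval]; exact Complex.ofReal_im _
    have hre0 : 0 ≤ lc.re := by
      rw [hlcval, Complex.ofReal_re]
      exact div_nonneg (mul_nonneg (by linarith) hR0) hQpos.le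
    have hre1 : lc.re ≤ 1 := (Complex.re_le_norm lc).trans habs
    have hdim : d.im = 0 := by
      have h : lc.im = -d.im := by rw [hlc]; simp
      rw [him] at h; linarith
    have hdre : d.re = 1 - lc.re := by
      have h : lc.re = 1 - d.re := by rw [hlc]; simp
      linarith
    exact ⟨hdim, by rw [hdre]; constructor <;> linarith⟩
end

section
/- Let W be an m×n row-stochastic matrix whose rows are not all equal. Let p* ∈ ℝ^m have all entries positive with Σ_i p*_i = 1, and suppose s := p*W has all entries positive. Let D_s and D_{p*} be the diagonal matrices with diagonals s and p*. Then the spectral radius of I_m − W D_s^{-1} W^T D_{p*} is at least Σ_{j=1}^n min_{1≤i≤m} W_{ij}. -/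
open Finset Matrix

open Polynomial

lemma eval_charpoly_det {m : ℕ} (M : Matrix (Fin m) (Fin m) ℂ) (μ : ℂ) :
    M.charpoly.eval μ = (μ • (1 : Matrix (Fin m) (Fin m) ℂ) - M).det := by
  rw [Matrix.charpoly, ← Polynomial.coe_evalRingHom, RingHom.map_det]
  congr 1
  ext i j
  by_cases h : i = j <;>
    simp [h, charmatrix_apply, Matrix.one_apply, Matrix.diagonal_apply, Matrix.sub_apply,
      Matrix.smul_apply]

lemma mem_spectrum_iff_det {m : ℕ} (M : Matrix (Fin m) (Fin m) ℂ) (μ : ℂ) :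
    μ ∈ spectrum ℂ M ↔ (μ • (1 : Matrix (Fin m) (Fin m) ℂ) - M).det = 0 := by
  rw [spectrum.mem_iff, Matrix.isUnit_iff_isUnit_det, isUnit_iff_ne_zero, not_ne_iff,
    Algebra.algebraMap_eq_smul_one]

lemma mem_spectrum_iff_vec {m : ℕ} (M : Matrix (Fin m) (Fin m) ℂ) (μ : ℂ) :
    μ ∈ spectrum ℂ M ↔ ∃ v, v ≠ 0 ∧ M.mulVec v = μ • v := by
  rw [mem_spectrum_iff_det, ← Matrix.exists_mulVec_eq_zero_iff]
  constructor
  · rintro ⟨v, hv, h⟩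
    refine ⟨v, hv, ?_⟩
    rwa [Matrix.sub_mulVec, Matrix.smul_mulVec, Matrix.one_mulVec, sub_eq_zero, eq_comm] at h
  · rintro ⟨v, hv, h⟩
    refine ⟨v, hv, ?_⟩
    rw [Matrix.sub_mulVec, Matrix.smul_mulVec, Matrix.one_mulVec, sub_eq_zero, h]

lemma spectrum_transpose {m : ℕ} (M : Matrix (Fin m) (Fin m) ℂ) :
    spectrum ℂ Mᵀ = spectrum ℂ M := by
  ext μ
  rw [mem_spectrum_iff_det, mem_spectrum_iff_det, ← Matrix.det_transpose (μ • 1 - M),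
    Matrix.transpose_sub, Matrix.transpose_smul, Matrix.transpose_one]

lemma root_charpoly_mem_spectrum {m : ℕ} (M : Matrix (Fin m) (Fin m) ℂ) {μ : ℂ}
    (h : μ ∈ M.charpoly.roots) : μ ∈ spectrum ℂ M := by
  rw [mem_spectrum_iff_det, ← eval_charpoly_det]
  exact (Polynomial.isRoot_of_mem_roots h)

lemma abs_le_of_mem_spectrum {m : ℕ} (M : Matrix (Fin m) (Fin m) ℂ) (C : ℝ)
    (h : ∀ i, ∑ k, ‖M i k‖ ≤ C) {d : ℂ} (hd : d ∈ spectrum ℂ M) :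
    ‖d‖ ≤ C := by
  rw [mem_spectrum_iff_vec] at hd
  obtain ⟨v, hv0, hv⟩ := hd
  have hne : Nonempty (Fin m) := by
    by_contra hn
    exact hv0 (funext fun i => absurd ⟨i⟩ hn)
  obtain ⟨i0, -, hi0⟩ := Finset.exists_max_image Finset.univ (fun k => ‖v k‖)
    Finset.univ_nonempty
  have hvpos : 0 < ‖v i0‖ := by
    obtain ⟨k, hk⟩ := Function.ne_iff.mp hv0
    exact lt_of_lt_of_le (by simpa using hk) (hi0 k (Finset.mem_univ k))
  have key : ‖d‖ * ‖v i0‖ ≤ C * ‖v i0‖ := by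
    have h1 : (∑ k, M i0 k * v k) = d * v i0 := by
      have := congrFun hv i0
      simpa [Matrix.mulVec, dotProduct, Pi.smul_apply, smul_eq_mul] using this
    calc ‖d‖ * ‖v i0‖ = ‖∑ k, M i0 k * v k‖ := by
          rw [h1, norm_mul]
      _ ≤ ∑ k, ‖M i0 k * v k‖ := norm_sum_le _ _
      _ ≤ ∑ k, ‖M i0 k‖ * ‖v i0‖ := by
          refine Finset.sum_le_sum fun k _ => ?_
          rw [norm_mul]
          exact mul_le_mul_of_nonneg_left (hi0 k (Finset.mem_univ k)) (by positivity)
      _ = (∑ k, ‖M i0 k‖) * ‖v i0‖ := by rw [Finset.sum_mul]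
      _ ≤ C * ‖v i0‖ := mul_le_mul_of_nonneg_right (h i0) (le_of_lt hvpos)
  exact le_of_mul_le_mul_right key hvpos

/-- The spectral radius of a real square matrix: the maximum modulus of its
complex eigenvalues. -/
noncomputable def specRad {m : ℕ} (A : Matrix (Fin m) (Fin m) ℝ) : ℝ :=
  sSup {x : ℝ | ∃ d : ℂ, d ∈ spectrum ℂ (A.map (fun t : ℝ => (t : ℂ))) ∧
    x = ‖d‖}

/-- Corollary 1: the spectral radius of `I_m − W D_s⁻¹ Wᵀ D_{p*}` is at least
`∑_j min_i W_{ij}`, provided the rows of `W` are not all equal. -/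
theorem specRad_lower_bound {m n : ℕ}
    (W : Matrix (Fin m) (Fin n) ℝ)
    (hW0 : ∀ i j, 0 ≤ W i j) (hW1 : ∀ i, ∑ j, W i j = 1)
    (hne : ∃ i k : Fin m, ∃ j : Fin n, W i j ≠ W k j)
    (pstar : Fin m → ℝ) (hp : ∀ i, 0 < pstar i) (hp1 : ∑ i, pstar i = 1)
    (s : Fin n → ℝ) (hs : ∀ j, s j = ∑ i, pstar i * W i j)
    (hspos : ∀ j, 0 < s j) :
    ∑ j, (⨅ i, W i j) ≤
      specRad (1 - W * Matrix.diagonal (fun j => (s j)⁻¹) * Wᵀ *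
        Matrix.diagonal pstar) := by
  classical
  obtain ⟨i1, k1, j1, hik⟩ := hne
  have him : i1 ≠ k1 := fun h => hik (by rw [h])
  have hmne : Nonempty (Fin m) := ⟨i1⟩
  set B : Matrix (Fin m) (Fin m) ℝ :=
    W * Matrix.diagonal (fun j => (s j)⁻¹) * Wᵀ * Matrix.diagonal pstar with hB
  have hBapp : ∀ i k, B i k = (∑ j, W i j * (s j)⁻¹ * W k j) * pstar k := by
    intro i k
    rw [hB, Matrix.mul_diagonal, Matrix.mul_apply]
    congr 1
    refine Finset.sum_congr rfl fun j _ => ?_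
    rw [Matrix.mul_diagonal, Matrix.transpose_apply]
  have hmle : ∀ (j : Fin n) (i : Fin m), (⨅ i', W i' j) ≤ W i j :=
    fun j i => ciInf_le (Finite.bddBelow_range _) i
  have hmj0 : ∀ j : Fin n, 0 ≤ ⨅ i, W i j := fun j => le_ciInf fun i => hW0 i j
  set c : ℝ := ∑ j, (⨅ i, W i j) with hc
  set v : Fin m → ℝ := fun k => (∑ j, (⨅ i, W i j) * (s j)⁻¹ * W k j) * pstar k with hv
  have hWcol : ∀ j, ∑ k, W k j * pstar k = s j := by
    intro j
    rw [hs j]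
    exact Finset.sum_congr rfl fun i _ => mul_comm _ _
  have key : ∀ a : Fin n → ℝ, ∑ k, (∑ j, a j * (s j)⁻¹ * W k j) * pstar k = ∑ j, a j := by
    intro a
    calc ∑ k, (∑ j, a j * (s j)⁻¹ * W k j) * pstar k
        = ∑ k, ∑ j, a j * (s j)⁻¹ * (W k j * pstar k) := by
          refine Finset.sum_congr rfl fun k _ => ?_
          rw [Finset.sum_mul]
          exact Finset.sum_congr rfl fun j _ => by ring
      _ = ∑ j, ∑ k, a j * (s j)⁻¹ * (W k j * pstar k) := Finset.sum_comm
      _ = ∑ j, a j * (s j)⁻¹ * ∑ k, W k j * pstar k := by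
          refine Finset.sum_congr rfl fun j _ => ?_
          rw [Finset.mul_sum]
      _ = ∑ j, a j := by
          refine Finset.sum_congr rfl fun j _ => ?_
          rw [hWcol j, mul_assoc, inv_mul_cancel₀ (hspos j).ne', mul_one]
  have hBrow : ∀ i, ∑ k, B i k = 1 := by
    intro i
    have h1 : ∑ k, B i k = ∑ k, (∑ j, W i j * (s j)⁻¹ * W k j) * pstar k :=
      Finset.sum_congr rfl fun k _ => hBapp i k
    rw [h1, key (W i), hW1 i]
  have hvsum : ∑ k, v k = c := key _
  have hvleB : ∀ i k, v k ≤ B i k := by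
    intro i k
    rw [hBapp, hv]
    refine mul_le_mul_of_nonneg_right (Finset.sum_le_sum fun j _ => ?_) (hp k).le
    exact mul_le_mul_of_nonneg_right
      (mul_le_mul_of_nonneg_right (hmle j i) (inv_nonneg.mpr (hspos j).le)) (hW0 k j)
  have hv0 : ∀ k, 0 ≤ v k := by
    intro k
    refine mul_nonneg (Finset.sum_nonneg fun j _ => ?_) (hp k).le
    exact mul_nonneg (mul_nonneg (hmj0 j) (inv_nonneg.mpr (hspos j).le)) (hW0 k j)
  have hB0 : ∀ i k, 0 ≤ B i k := fun i k => (hv0 k).trans (hvleB i k)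
  -- complex side
  set Bc : Matrix (Fin m) (Fin m) ℂ := B.map (fun t : ℝ => (t : ℂ)) with hBcdef
  have hBc : ∀ i k, Bc i k = ((B i k : ℝ) : ℂ) := fun i k => rfl
  rw [specRad]
  set Amap : Matrix (Fin m) (Fin m) ℂ := (1 - B).map (fun t : ℝ => (t : ℂ)) with hAmapdef
  have hAmap : Amap = 1 - Bc := by
    ext i k
    by_cases h : i = k <;>
      simp [hAmapdef, hBcdef, Matrix.map_apply, Matrix.sub_apply, Matrix.one_apply, h]
  have hbdd : BddAbove {x : ℝ | ∃ d : ℂ, d ∈ spectrum ℂ Amap ∧ x = ‖d‖} := by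
    refine ⟨∑ i, ∑ k, ‖Amap i k‖, ?_⟩
    rintro x ⟨d, hd, rfl⟩
    refine abs_le_of_mem_spectrum _ _ (fun i => ?_) hd
    exact Finset.single_le_sum (f := fun i => ∑ k, ‖Amap i k‖)
      (fun i _ => Finset.sum_nonneg fun k _ => (norm_nonneg _)) (Finset.mem_univ i)
  suffices hex : ∃ d : ℂ, d ∈ spectrum ℂ Amap ∧ c ≤ ‖d‖ by
    obtain ⟨d, hd, hcd⟩ := hex
    exact hcd.trans (le_csSup hbdd ⟨d, hd, rfl⟩)
  have honevec : (fun _ : Fin m => (1 : ℂ)) ≠ 0 := by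
    intro h
    simpa using congrFun h i1
  have hBrowC : ∀ k, ∑ i, ((B k i : ℝ) : ℂ) = 1 := by
    intro k
    rw [← Complex.ofReal_sum, hBrow k, Complex.ofReal_one]
  have hBone : Bc.mulVec (fun _ => (1 : ℂ)) = (fun _ => (1 : ℂ)) := by
    funext i
    simp only [Matrix.mulVec, dotProduct, hBc, mul_one]
    exact hBrowC i
  by_cases hc0 : c ≤ 0
  · refine ⟨0, ?_, by simpa using hc0⟩
    rw [hAmap, mem_spectrum_iff_vec]
    refine ⟨fun _ => (1 : ℂ), honevec, ?_⟩
    rw [Matrix.sub_mulVec, Matrix.one_mulVec, hBone, sub_self, zero_smul]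
  push_neg at hc0
  have hvpos : ∀ k, 0 < v k := by
    obtain ⟨j0, -, hj0⟩ : ∃ j ∈ Finset.univ, 0 < ⨅ i, W i j := by
      by_contra hcon
      push_neg at hcon
      have : c ≤ 0 := Finset.sum_nonpos fun j hj => hcon j hj
      linarith
    intro k
    refine mul_pos (Finset.sum_pos' (fun j _ => ?_) ⟨j0, Finset.mem_univ j0, ?_⟩) (hp k)
    · exact mul_nonneg (mul_nonneg (hmj0 j) (inv_nonneg.mpr (hspos j).le)) (hW0 k j)
    · have h1 : 0 < W k j0 := lt_of_lt_of_le hj0 (hmle j0 k)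
      have h2 : 0 < (s j0)⁻¹ := inv_pos.mpr (hspos j0)
      positivity
  obtain ⟨lam, hlam, hlam1⟩ : ∃ l : ℂ, l ∈ spectrum ℂ Bc ∧ l ≠ 1 := by
    by_contra hcon
    push_neg at hcon
    have hroots : ∀ μ ∈ Bc.charpoly.roots, μ = (1 : ℂ) :=
      fun μ hμ => hcon μ (root_charpoly_mem_spectrum Bc hμ)
    have hcard : (Bc.charpoly.roots).card = m := by
      have hsp : Bc.charpoly.Splits := IsAlgClosed.splits _
      rw [(Polynomial.splits_iff_card_roots).mp hsp, Matrix.charpoly_natDegree_eq_dim,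
        Fintype.card_fin]
    have htr : Bc.trace = (m : ℂ) := by
      have hrep : Bc.charpoly.roots = Multiset.replicate m (1 : ℂ) := by
        have h9 := Multiset.eq_replicate_card.mpr hroots
        rwa [hcard] at h9
      rw [Matrix.trace_eq_sum_roots_charpoly, hrep, Multiset.sum_replicate, nsmul_eq_mul, mul_one]
    have htrR : Matrix.trace B = (m : ℝ) := by
      have h2 : Bc.trace = ((Matrix.trace B : ℝ) : ℂ) := by
        simp [Matrix.trace, hBcdef, Matrix.map_apply, Matrix.diag]
      rw [h2] at htr
      exact_mod_cast htr
    have hdle : ∀ i, B i i ≤ 1 := fun i => by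
      rw [← hBrow i]
      exact Finset.single_le_sum (fun k _ => hB0 i k) (Finset.mem_univ i)
    have hstrict : B i1 i1 < 1 := by
      have h2 : B i1 i1 + B i1 k1 ≤ ∑ k, B i1 k := by
        rw [← Finset.sum_pair him]
        exact Finset.sum_le_sum_of_subset_of_nonneg (Finset.subset_univ _)
          (fun k _ _ => hB0 i1 k)
      have h3 := hvleB i1 k1
      have h4 := hvpos k1
      rw [hBrow i1] at h2
      linarith
    have hlt : Matrix.trace B < (m : ℝ) := by
      calc Matrix.trace B = ∑ i, B i i := rfl
        _ < ∑ _i : Fin m, (1 : ℝ) :=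
            Finset.sum_lt_sum (fun i _ => hdle i) ⟨i1, Finset.mem_univ i1, hstrict⟩
        _ = (m : ℝ) := by simp
    rw [htrR] at hlt
    exact lt_irrefl _ hlt
  rw [← spectrum_transpose, mem_spectrum_iff_vec] at hlam
  obtain ⟨x, hx0, hx⟩ := hlam
  have hxc : ∀ i, ∑ k, ((B k i : ℝ) : ℂ) * x k = lam * x i := by
    intro i
    have h1 := congrFun hx i
    simpa [Matrix.mulVec, dotProduct, Matrix.transpose_apply, hBc, Pi.smul_apply,
      smul_eq_mul] using h1
  have hsum0 : ∑ i, x i = 0 := by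
    have h1 : lam * ∑ i, x i = ∑ i, x i := by
      calc lam * ∑ i, x i = ∑ i, lam * x i := Finset.mul_sum _ _ _
        _ = ∑ i, ∑ k, ((B k i : ℝ) : ℂ) * x k := Finset.sum_congr rfl fun i _ => (hxc i).symm
        _ = ∑ k, ∑ i, ((B k i : ℝ) : ℂ) * x k := Finset.sum_comm
        _ = ∑ k, (∑ i, ((B k i : ℝ) : ℂ)) * x k := by
            refine Finset.sum_congr rfl fun k _ => ?_
            rw [Finset.sum_mul]
        _ = ∑ k, x k := by
            refine Finset.sum_congr rfl fun k _ => ?_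
            rw [hBrowC k, one_mul]
    have h2 : (lam - 1) * ∑ i, x i = 0 := by
      rw [sub_mul, one_mul, h1, sub_self]
    rcases mul_eq_zero.mp h2 with h | h
    · exact absurd (sub_eq_zero.mp h) hlam1
    · exact h
  set T : ℝ := ∑ i, ‖x i‖ with hT
  have hTpos : 0 < T := by
    obtain ⟨k, hk⟩ := Function.ne_iff.mp hx0
    refine Finset.sum_pos' (fun i _ => norm_nonneg _) ⟨k, Finset.mem_univ k, ?_⟩
    simpa using hk
  have hmul : ‖lam‖ * T ≤ (1 - c) * T := by
    calc ‖lam‖ * T = ∑ i, ‖lam * x i‖ := by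
          rw [hT, Finset.mul_sum]
          exact Finset.sum_congr rfl fun i _ => (norm_mul _ _).symm
      _ ≤ ∑ i, ∑ k, (B k i - v i) * ‖x k‖ := by
          refine Finset.sum_le_sum fun i _ => ?_
          have heq : lam * x i = ∑ k, (((B k i - v i : ℝ) : ℂ)) * x k := by
            have e1 : ∑ k, (((B k i - v i : ℝ) : ℂ)) * x k
                = (∑ k, ((B k i : ℝ) : ℂ) * x k) - ((v i : ℝ) : ℂ) * ∑ k, x k := by
              rw [Finset.mul_sum, ← Finset.sum_sub_distrib]
              refine Finset.sum_congr rfl fun k _ => ?_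
              push_cast
              ring
            rw [e1, hsum0, mul_zero, sub_zero, hxc i]
          rw [heq]
          refine le_trans (norm_sum_le _ _) (le_of_eq (Finset.sum_congr rfl fun k _ => ?_))
          rw [norm_mul, Complex.norm_real, Real.norm_eq_abs, abs_of_nonneg (sub_nonneg.mpr (hvleB k i))]
      _ = ∑ k, (∑ i, (B k i - v i)) * ‖x k‖ := by
          rw [Finset.sum_comm]
          exact Finset.sum_congr rfl fun k _ => (Finset.sum_mul _ _ _).symm
      _ = ∑ k, (1 - c) * ‖x k‖ := by
          refine Finset.sum_congr rfl fun k _ => ?_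
          rw [Finset.sum_sub_distrib, hBrow k, hvsum]
      _ = (1 - c) * T := by rw [hT, Finset.mul_sum]
  have habs : ‖lam‖ ≤ 1 - c := le_of_mul_le_mul_right hmul hTpos
  refine ⟨1 - lam, ?_, ?_⟩
  · rw [hAmap, ← spectrum_transpose, mem_spectrum_iff_vec]
    refine ⟨x, hx0, ?_⟩
    rw [Matrix.transpose_sub, Matrix.transpose_one, Matrix.sub_mulVec, Matrix.one_mulVec, hx]
    funext i
    simp [sub_smul, Pi.smul_apply, smul_eq_mul, sub_mul, one_mul]
  · have h5 : 1 - ‖lam‖ ≤ ‖1 - lam‖ := by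
      have := norm_sub_norm_le (1 : ℂ) lam
      simpa using this
    linarith
end

section
/- Let W be an m×n row-stochastic matrix, and let r be a nonnegative 1×m row vector with r_+ := Σ_i r_i < 1 satisfying W_{ij} ≥ (rW)_j for all i, j (i.e., W ≥ 1_m·rW entrywise). Let p̂ ∈ ℝ^m have all entries positive with Σ_i p̂_i = 1, and suppose s := p̂W has all entries positive. Set U := (I_m − 1_m r)/(1−r_+), p* := (1−r_+)·p̂ + r, F := W D_s^{-1} W^T, and A := F U^T D_{p*}, where D_s and D_{p*} are the diagonal matrices with diagonals s and p*. Then every complex eigenvalue of A is real and lies in the interval [0,1]. -/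
open Finset Matrix

/-- Every complex eigenvalue of `A = F Uᵀ D_{p*}`, where `F = W D_s⁻¹ Wᵀ`,
`U = (I_m − 1ₘ r)/(1−r₊)` and `p* = (1−r₊)p̂ + r`, is real and lies in `[0,1]`. -/
theorem A_eigenvalues_in_unit_interval {m n : ℕ}
    (W : Matrix (Fin m) (Fin n) ℝ)
    (hW0 : ∀ i j, 0 ≤ W i j) (hW1 : ∀ i, ∑ j, W i j = 1)
    (r : Fin m → ℝ) (hr0 : ∀ i, 0 ≤ r i) (hr1 : ∑ i, r i < 1)
    (hrW : ∀ i j, (∑ k, r k * W k j) ≤ W i j)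
    (phat : Fin m → ℝ) (hph : ∀ i, 0 < phat i) (hph1 : ∑ i, phat i = 1)
    (s : Fin n → ℝ) (hs : ∀ j, s j = ∑ i, phat i * W i j)
    (hspos : ∀ j, 0 < s j)
    (U : Matrix (Fin m) (Fin m) ℝ)
    (hU : U = (1 - ∑ i, r i)⁻¹ • (1 - Matrix.of fun (_ : Fin m) k => r k))
    (pstar : Fin m → ℝ) (hpstar : ∀ i, pstar i = (1 - ∑ i', r i') * phat i + r i)
    (F : Matrix (Fin m) (Fin m) ℝ)
    (hF : F = W * Matrix.diagonal (fun j => (s j)⁻¹) * Wᵀ)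
    (A : Matrix (Fin m) (Fin m) ℝ)
    (hA : A = F * Uᵀ * Matrix.diagonal pstar) :
    ∀ d : ℂ, d ∈ spectrum ℂ (A.map (fun t : ℝ => (t : ℂ))) →
      d.im = 0 ∧ 0 ≤ d.re ∧ d.re ≤ 1 := by
  intro d hd
  have hrp0 : (0:ℝ) ≤ ∑ i, r i := Finset.sum_nonneg fun i _ => hr0 i
  have hc : (0:ℝ) < 1 - ∑ i, r i := by linarith
  set c : ℝ := 1 - ∑ i, r i with hcdef
  have hcne : c ≠ 0 := ne_of_gt hc
  have hc1 : c ≤ 1 := by rw [hcdef]; linarith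
  set q : Fin n → ℝ := fun j => ∑ k, r k * W k j with hqdef
  set V : Fin m → Fin n → ℝ := fun i j => c⁻¹ * (W i j - q j) with hVdef
  have hq0 : ∀ j, 0 ≤ q j := fun j => Finset.sum_nonneg fun k _ => mul_nonneg (hr0 k) (hW0 k j)
  have hV0 : ∀ i j, 0 ≤ V i j := fun i j =>
    mul_nonneg (inv_nonneg.mpr hc.le) (sub_nonneg.mpr (hrW i j))
  have hqsum : ∑ j, q j = ∑ i, r i := by
    simp only [hqdef]
    rw [Finset.sum_comm]
    exact Finset.sum_congr rfl fun k _ => by rw [← Finset.mul_sum, hW1 k, mul_one]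
  have hV1 : ∀ i, ∑ j, V i j = 1 := by
    intro i
    simp only [hVdef]
    rw [← Finset.mul_sum, Finset.sum_sub_distrib, hW1 i, hqsum]
    exact inv_mul_cancel₀ hcne
  have hpp : ∀ i, 0 < pstar i := by
    intro i; rw [hpstar i]
    have := hph i
    nlinarith [hr0 i]
  have hpsum : ∑ i, pstar i = 1 := by
    simp only [hpstar]
    rw [Finset.sum_add_distrib, ← Finset.mul_sum, hph1, hcdef]
    ring
  have hsW : ∀ j, ∑ i, pstar i * W i j = c * s j + q j := by
    intro j
    calc ∑ i, pstar i * W i j = ∑ i, (c * (phat i * W i j) + r i * W i j) := by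
          refine Finset.sum_congr rfl fun i _ => ?_
          rw [hpstar i]; ring
      _ = c * ∑ i, phat i * W i j + ∑ i, r i * W i j := by
          rw [Finset.sum_add_distrib, Finset.mul_sum]
      _ = c * s j + q j := by rw [hs j]
  have hsV : ∀ j, ∑ i, pstar i * V i j = s j := by
    intro j
    have h2 : ∀ i, pstar i * V i j = c⁻¹ * (pstar i * W i j - pstar i * q j) := fun i => by
      simp only [hVdef]; ring
    rw [Finset.sum_congr rfl fun i _ => h2 i, ← Finset.mul_sum, Finset.sum_sub_distrib,
      ← Finset.sum_mul, hsW, hpsum, one_mul]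
    field_simp
    ring
  -- entrywise formula for A
  have hF' : ∀ i l, F i l = ∑ j, W i j * (s j)⁻¹ * W l j := by
    intro i l
    rw [hF, Matrix.mul_apply]
    exact Finset.sum_congr rfl fun j _ => by rw [Matrix.mul_diagonal, Matrix.transpose_apply]
  have hU' : ∀ k l, U k l = c⁻¹ * ((if k = l then (1:ℝ) else 0) - r l) := by
    intro k l
    rw [hU]
    simp [Matrix.smul_apply, Matrix.sub_apply, Matrix.one_apply, smul_eq_mul]
  have hUW : ∀ k j, ∑ l, U k l * W l j = V k j := by
    intro k j
    simp only [hU']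
    have h3 : ∀ l, c⁻¹ * ((if k = l then (1:ℝ) else 0) - r l) * W l j
        = c⁻¹ * ((if k = l then W l j else 0) - r l * W l j) := by
      intro l; by_cases h : k = l <;> simp [h] <;> ring
    rw [Finset.sum_congr rfl fun l _ => h3 l, ← Finset.mul_sum, Finset.sum_sub_distrib,
      Finset.sum_ite_eq]
    simp [hVdef, hqdef]
  have hAik : ∀ i k, A i k = pstar k * ∑ j, W i j * ((s j)⁻¹ * V k j) := by
    intro i k
    rw [hA, Matrix.mul_diagonal, mul_comm]
    congr 1
    rw [Matrix.mul_apply]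
    calc ∑ l, F i l * Uᵀ l k
        = ∑ l, ∑ j, W i j * (s j)⁻¹ * W l j * U k l := by
          refine Finset.sum_congr rfl fun l _ => ?_
          rw [Matrix.transpose_apply, hF', Finset.sum_mul]
      _ = ∑ j, ∑ l, W i j * (s j)⁻¹ * W l j * U k l := Finset.sum_comm
      _ = ∑ j, W i j * ((s j)⁻¹ * ∑ l, U k l * W l j) := by
          refine Finset.sum_congr rfl fun j _ => ?_
          rw [Finset.mul_sum, Finset.mul_sum]
          exact Finset.sum_congr rfl fun l _ => by ring
      _ = ∑ j, W i j * ((s j)⁻¹ * V k j) := Finset.sum_congr rfl fun j _ => by rw [hUW]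
  have hA0 : ∀ i k, 0 ≤ A i k := by
    intro i k
    rw [hAik]
    exact mul_nonneg (hpp k).le (Finset.sum_nonneg fun j _ =>
      mul_nonneg (hW0 i j) (mul_nonneg (inv_nonneg.mpr (hspos j).le) (hV0 k j)))
  have hArow : ∀ i, ∑ k, A i k = 1 := by
    intro i
    calc ∑ k, A i k = ∑ k, ∑ j, W i j * (s j)⁻¹ * (pstar k * V k j) := by
          refine Finset.sum_congr rfl fun k _ => ?_
          rw [hAik, Finset.mul_sum]
          exact Finset.sum_congr rfl fun j _ => by ring
      _ = ∑ j, ∑ k, W i j * (s j)⁻¹ * (pstar k * V k j) := Finset.sum_comm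
      _ = ∑ j, W i j := by
          refine Finset.sum_congr rfl fun j _ => ?_
          rw [← Finset.mul_sum, hsV, mul_assoc, inv_mul_cancel₀ (hspos j).ne', mul_one]
      _ = 1 := hW1 i
  -- M and v decomposition : A = c • M + 1 vᵀ
  set Mm : Fin m → Fin m → ℝ := fun i k => pstar k * ∑ j, V i j * ((s j)⁻¹ * V k j) with hMdef
  set v : Fin m → ℝ := fun k => pstar k * ∑ j, q j * ((s j)⁻¹ * V k j) with hvdef
  have hAM : ∀ i k, A i k = c * Mm i k + v k := by
    intro i k
    rw [hAik]
    simp only [hMdef, hvdef]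
    have hW' : ∀ j, W i j * ((s j)⁻¹ * V k j)
        = c * (V i j * ((s j)⁻¹ * V k j)) + q j * ((s j)⁻¹ * V k j) := by
      intro j
      have hWd : W i j = c * V i j + q j := by
        simp only [hVdef]; field_simp
        ring
      rw [hWd]; ring
    rw [Finset.sum_congr rfl fun j _ => hW' j, Finset.sum_add_distrib, ← Finset.mul_sum]
    ring
  have hMrow : ∀ i, ∑ k, Mm i k = 1 := by
    intro i
    calc ∑ k, Mm i k = ∑ k, ∑ j, V i j * (s j)⁻¹ * (pstar k * V k j) := by
          refine Finset.sum_congr rfl fun k _ => ?_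
          simp only [hMdef]
          rw [Finset.mul_sum]
          exact Finset.sum_congr rfl fun j _ => by ring
      _ = ∑ j, ∑ k, V i j * (s j)⁻¹ * (pstar k * V k j) := Finset.sum_comm
      _ = ∑ j, V i j := by
          refine Finset.sum_congr rfl fun j _ => ?_
          rw [← Finset.mul_sum, hsV, mul_assoc, inv_mul_cancel₀ (hspos j).ne', mul_one]
      _ = 1 := hV1 i
  -- complexification and eigenvector
  set Ac : Matrix (Fin m) (Fin m) ℂ := A.map (fun t : ℝ => (t : ℂ)) with hAcdef
  have hunit : ¬ IsUnit (algebraMap ℂ (Matrix (Fin m) (Fin m) ℂ) d - Ac) :=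
    spectrum.mem_iff.mp hd
  have hdet : (algebraMap ℂ (Matrix (Fin m) (Fin m) ℂ) d - Ac).det = 0 := by
    by_contra h
    exact hunit ((Matrix.isUnit_iff_isUnit_det _).mpr (isUnit_iff_ne_zero.mpr h))
  obtain ⟨x, hx0, hxv⟩ := (Matrix.exists_mulVec_eq_zero_iff).mpr hdet
  have hveq : Ac.mulVec x = d • x := by
    have h1 := hxv
    rw [Matrix.sub_mulVec, Algebra.algebraMap_eq_smul_one, Matrix.smul_mulVec,
      Matrix.one_mulVec, sub_eq_zero] at h1
    exact h1.symm
  have hxc : ∀ i, ∑ k, ((A i k : ℝ) : ℂ) * x k = d * x i := by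
    intro i
    have h1 := congrFun hveq i
    simpa [Matrix.mulVec, dotProduct, hAcdef, Matrix.map_apply] using h1
  obtain ⟨i1, hi1⟩ : ∃ i, x i ≠ 0 := by
    by_contra h
    push_neg at h
    exact hx0 (funext fun i => h i)
  -- |d| ≤ 1 since A is row-stochastic
  have habs : ‖d‖ ≤ 1 := by
    obtain ⟨i0, -, hi0⟩ := Finset.univ.exists_max_image (fun i => ‖x i‖)
      ⟨i1, Finset.mem_univ i1⟩
    have hx0pos : 0 < ‖x i0‖ :=
      lt_of_lt_of_le (norm_pos_iff.mpr hi1) (hi0 i1 (Finset.mem_univ i1))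
    have hb : ‖d‖ * ‖x i0‖ ≤ 1 * ‖x i0‖ := by
      rw [one_mul, ← norm_mul, ← hxc i0]
      calc ‖∑ k, ((A i0 k : ℝ):ℂ) * x k‖
          ≤ ∑ k, ‖((A i0 k : ℝ):ℂ) * x k‖ := norm_sum_le _ _
        _ = ∑ k, A i0 k * ‖x k‖ := by
            refine Finset.sum_congr rfl fun k _ => ?_
            rw [norm_mul, Complex.norm_real, Real.norm_of_nonneg (hA0 i0 k)]
        _ ≤ ∑ k, A i0 k * ‖x i0‖ := Finset.sum_le_sum fun k _ =>
            mul_le_mul_of_nonneg_left (hi0 k (Finset.mem_univ k)) (hA0 i0 k)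
        _ = ‖x i0‖ := by rw [← Finset.sum_mul, hArow, one_mul]
    exact le_of_mul_le_mul_right hb hx0pos
  have hre1 : d.re ≤ 1 := le_trans (Complex.re_le_norm d) habs
  -- main case analysis
  by_cases hdc : d = (c : ℂ)
  · refine ⟨by simp [hdc], by simp [hdc]; exact hc.le, hre1⟩
  · set β : ℂ := ∑ k, ((v k : ℝ) : ℂ) * x k with hβdef
    have hdcne : d - (c:ℂ) ≠ 0 := sub_ne_zero.mpr hdc
    set γ : ℂ := β / (d - (c:ℂ)) with hγdef
    set y : Fin m → ℂ := fun i => x i - γ with hydef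
    have hMrowC : ∀ i, ∑ k, ((Mm i k : ℝ) : ℂ) = 1 := by
      intro i
      exact_mod_cast hMrow i
    have hEq1 : ∀ i, (c:ℂ) * (∑ k, ((Mm i k : ℝ) : ℂ) * x k) + β = d * x i := by
      intro i
      have e : ∑ k, ((A i k:ℝ):ℂ) * x k
          = (c:ℂ) * (∑ k, ((Mm i k : ℝ):ℂ) * x k) + β := by
        rw [hβdef, Finset.mul_sum, ← Finset.sum_add_distrib]
        exact Finset.sum_congr rfl fun k _ => by rw [hAM i k]; push_cast; ring
      rw [← e, hxc i]
    have hEq2 : ∀ i, (c:ℂ) * (∑ k, ((Mm i k : ℝ) : ℂ) * y k) = d * y i := by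
      intro i
      have e2 : ∑ k, ((Mm i k : ℝ) : ℂ) * y k
          = (∑ k, ((Mm i k : ℝ) : ℂ) * x k) - γ := by
        simp only [hydef]
        rw [Finset.sum_congr rfl (fun k _ => mul_sub ((Mm i k : ℝ):ℂ) (x k) γ),
          Finset.sum_sub_distrib, ← Finset.sum_mul, hMrowC i, one_mul]
      have e3 : d * y i = d * x i - d * γ := by simp only [hydef]; ring
      have hγ : (d - (c:ℂ)) * γ = β := by
        rw [hγdef]; field_simp
      rw [e2, e3, mul_sub, ← hEq1 i]
      linear_combination hγ
    by_cases hy0 : y = 0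
    · -- then x is constant and d = 1
      have hxg : ∀ i, x i = γ := by
        intro i
        have h5 := congrFun hy0 i
        simp only [hydef, Pi.zero_apply] at h5
        exact sub_eq_zero.mp h5
      have hγne : γ ≠ 0 := fun h => hi1 (by rw [hxg i1, h])
      have h6 := hxc i1
      rw [Finset.sum_congr rfl (fun k _ => by rw [hxg k]), ← Finset.sum_mul] at h6
      have hAr : ∑ k, ((A i1 k : ℝ):ℂ) = 1 := by exact_mod_cast hArow i1
      rw [hAr, one_mul, hxg i1] at h6
      have hd1 : d = 1 := by
        have h7 : d * γ = 1 * γ := by rw [one_mul]; exact h6.symm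
        exact mul_right_cancel₀ hγne h7
      exact ⟨by simp [hd1], by simp [hd1], hre1⟩
    · -- quadratic-form argument : d = c * Q / P with Q ≥ 0, P > 0
      set f : Fin m → Fin n → ℂ :=
        fun i j => ((pstar i * V i j : ℝ):ℂ) * (starRingEnd ℂ) (y i) with hfdef
      set g : Fin m → Fin n → ℂ :=
        fun k j => ((pstar k * V k j : ℝ):ℂ) * y k with hgdef
      set z : Fin n → ℂ := fun j => ∑ k, g k j with hzdef
      set P : ℝ := ∑ i, pstar i * Complex.normSq (y i) with hPdef
      set Q : ℝ := ∑ j, (s j)⁻¹ * Complex.normSq (z j) with hQdef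
      obtain ⟨i2, hi2⟩ : ∃ i, y i ≠ 0 := by
        by_contra h
        push_neg at h
        exact hy0 (funext fun i => h i)
      have hPpos : 0 < P := by
        rw [hPdef]
        refine Finset.sum_pos'
          (fun i _ => mul_nonneg (hpp i).le (Complex.normSq_nonneg _))
          ⟨i2, Finset.mem_univ i2, ?_⟩
        exact mul_pos (hpp i2) (Complex.normSq_pos.mpr hi2)
      have hQ0 : 0 ≤ Q := Finset.sum_nonneg fun j _ =>
        mul_nonneg (inv_nonneg.mpr (hspos j).le) (Complex.normSq_nonneg _)
      have hconj : ∀ j, (starRingEnd ℂ) (z j) = ∑ i, f i j := by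
        intro j
        simp only [hzdef, hgdef, hfdef]
        rw [map_sum]
        exact Finset.sum_congr rfl fun i _ => by rw [map_mul (starRingEnd ℂ), Complex.conj_ofReal]
      have expand : ∀ i,
          ((pstar i:ℝ):ℂ) * ((starRingEnd ℂ) (y i) * ((c:ℂ) * ∑ k, ((Mm i k:ℝ):ℂ) * y k))
          = ∑ k, ∑ j, ((c:ℂ) * (((s j)⁻¹:ℝ):ℂ)) * (f i j * g k j) := by
        intro i
        rw [Finset.mul_sum, Finset.mul_sum, Finset.mul_sum]
        refine Finset.sum_congr rfl fun k _ => ?_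
        have hMc : ((Mm i k : ℝ) : ℂ)
            = ∑ j, ((pstar k * (V i j * ((s j)⁻¹ * V k j)) : ℝ):ℂ) := by
          simp only [hMdef]
          push_cast
          rw [Finset.mul_sum]
        rw [hMc, Finset.sum_mul, Finset.mul_sum, Finset.mul_sum, Finset.mul_sum]
        refine Finset.sum_congr rfl fun j _ => ?_
        simp only [hfdef, hgdef]
        push_cast
        ring
      have hL : ∑ i, ((pstar i:ℝ):ℂ) *
            ((starRingEnd ℂ) (y i) * ((c:ℂ) * ∑ k, ((Mm i k:ℝ):ℂ) * y k))
          = ((c * Q : ℝ):ℂ) := by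
        calc ∑ i, ((pstar i:ℝ):ℂ) *
              ((starRingEnd ℂ) (y i) * ((c:ℂ) * ∑ k, ((Mm i k:ℝ):ℂ) * y k))
            = ∑ i, ∑ k, ∑ j, ((c:ℂ) * (((s j)⁻¹:ℝ):ℂ)) * (f i j * g k j) :=
              Finset.sum_congr rfl fun i _ => expand i
          _ = ∑ i, ∑ j, ∑ k, ((c:ℂ) * (((s j)⁻¹:ℝ):ℂ)) * (f i j * g k j) :=
              Finset.sum_congr rfl fun i _ => Finset.sum_comm
          _ = ∑ j, ∑ i, ∑ k, ((c:ℂ) * (((s j)⁻¹:ℝ):ℂ)) * (f i j * g k j) :=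
              Finset.sum_comm
          _ = ∑ j, ((c:ℂ) * (((s j)⁻¹:ℝ):ℂ)) * ((∑ i, f i j) * (∑ k, g k j)) := by
              refine Finset.sum_congr rfl fun j _ => ?_
              rw [Finset.sum_mul_sum, Finset.mul_sum]
              refine Finset.sum_congr rfl fun i _ => ?_
              rw [Finset.mul_sum]
          _ = ∑ j, ((c * ((s j)⁻¹ * Complex.normSq (z j)) : ℝ):ℂ) := by
              refine Finset.sum_congr rfl fun j _ => ?_
              have hzj : ∑ k, g k j = z j := rfl
              rw [← hconj j, hzj, mul_comm ((starRingEnd ℂ) (z j)) (z j), Complex.mul_conj]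
              push_cast
              ring
          _ = ((c * Q : ℝ):ℂ) := by
              rw [hQdef, Finset.mul_sum]
              push_cast
              ring
      have hR : ∑ i, ((pstar i:ℝ):ℂ) *
            ((starRingEnd ℂ) (y i) * ((c:ℂ) * ∑ k, ((Mm i k:ℝ):ℂ) * y k))
          = d * ((P:ℝ):ℂ) := by
        calc ∑ i, ((pstar i:ℝ):ℂ) *
              ((starRingEnd ℂ) (y i) * ((c:ℂ) * ∑ k, ((Mm i k:ℝ):ℂ) * y k))
            = ∑ i, ((pstar i:ℝ):ℂ) * ((starRingEnd ℂ) (y i) * (d * y i)) :=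
              Finset.sum_congr rfl fun i _ => by rw [hEq2 i]
          _ = d * ∑ i, ((pstar i * Complex.normSq (y i) : ℝ):ℂ) := by
              rw [Finset.mul_sum]
              refine Finset.sum_congr rfl fun i _ => ?_
              have h8 : (starRingEnd ℂ) (y i) * y i = ((Complex.normSq (y i) : ℝ):ℂ) := by
                rw [mul_comm]; exact Complex.mul_conj (y i)
              push_cast
              rw [← h8]
              ring
          _ = d * ((P:ℝ):ℂ) := by
              rw [hPdef]
              push_cast
              ring
      have hkey : ((c * Q : ℝ) : ℂ) = d * ((P : ℝ) : ℂ) := by rw [← hL, hR]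
      have hPne : ((P:ℝ):ℂ) ≠ 0 := by
        exact_mod_cast hPpos.ne'
      have hdval : d = ((c * Q / P : ℝ):ℂ) := by
        rw [Complex.ofReal_div, eq_div_iff hPne]
        exact hkey.symm
      refine ⟨by rw [hdval]; exact Complex.ofReal_im _, ?_, hre1⟩
      rw [hdval, Complex.ofReal_re]
      exact div_nonneg (mul_nonneg hc.le hQ0) hPpos.le
end

section
/- (Waterfilling normalization.) Let x ∈ ℝ^m have all entries positive, and let r ∈ ℝ^m have nonnegative entries with Σ_i r_i < 1. Then there exists a unique δ > 0 such that Σ_{i=1}^m max{r_i, δ·x_i} = 1. -/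
open Finset

/-- Waterfilling normalization: if `x > 0` entrywise and `∑ r_i < 1` with `r ≥ 0`,
there is a unique `δ > 0` with `∑_i max{r_i, δ x_i} = 1`. -/
theorem waterfilling_exists_unique {m : ℕ} (hm : 0 < m)
    (x : Fin m → ℝ) (hx : ∀ i, 0 < x i)
    (r : Fin m → ℝ) (hr0 : ∀ i, 0 ≤ r i) (hr1 : ∑ i, r i < 1) :
    ∃! δ : ℝ, 0 < δ ∧ ∑ i, max (r i) (δ * x i) = 1 := by
  haveI : Nonempty (Fin m) := ⟨⟨0, hm⟩⟩
  set f : ℝ → ℝ := fun δ => ∑ i, max (r i) (δ * x i) with hf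
  have hSpos : 0 < ∑ i, x i := Finset.sum_pos (fun i _ => hx i) univ_nonempty
  set S := ∑ i, x i with hS
  have hf_cont : Continuous f := by
    apply continuous_finset_sum
    intro i _
    exact (continuous_const.max ((continuous_id.mul continuous_const)))
  -- key monotonicity at solutions
  have key : ∀ a b : ℝ, 0 < a → f a = 1 → a < b → 1 < f b := by
    intro a b ha hfa hab
    obtain ⟨i, hi⟩ : ∃ i, r i < a * x i := by
      by_contra h
      push_neg at h
      have : f a = ∑ i, r i := Finset.sum_congr rfl (fun i _ => max_eq_left (h i))
      rw [hfa] at this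
      linarith
    have hlt : f a < f b := by
      apply Finset.sum_lt_sum
      · intro j _
        exact max_le_max le_rfl (mul_le_mul_of_nonneg_right hab.le (hx j).le)
      · refine ⟨i, mem_univ i, ?_⟩
        have h1 : max (r i) (a * x i) = a * x i := max_eq_right hi.le
        have h2 : a * x i < b * x i := by nlinarith [hx i]
        calc max (r i) (a * x i) = a * x i := h1
          _ < b * x i := h2
          _ ≤ max (r i) (b * x i) := le_max_right _ _
    linarith
  -- existence via IVT
  set δ0 : ℝ := (1 - ∑ i, r i) / (2 * S) with hδ0
  have hδ0pos : 0 < δ0 := div_pos (by linarith) (by linarith)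
  set δ1 : ℝ := δ0 + 1 / S with hδ1
  have hδ01 : δ0 ≤ δ1 := by
    have : 0 < 1 / S := by positivity
    simp only [hδ1]; linarith
  have hfδ0 : f δ0 ≤ 1 := by
    have h1 : f δ0 ≤ ∑ i, (r i + δ0 * x i) := by
      apply Finset.sum_le_sum
      intro i _
      exact max_le (le_add_of_nonneg_right (mul_nonneg hδ0pos.le (hx i).le)) (le_add_of_nonneg_left (hr0 i))
    rw [Finset.sum_add_distrib, ← Finset.mul_sum] at h1
    have : δ0 * S = (1 - ∑ i, r i) / 2 := by
      rw [hδ0]; field_simp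
    rw [← hS] at h1
    linarith
  have hfδ1 : 1 ≤ f δ1 := by
    have h1 : ∑ i, δ1 * x i ≤ f δ1 :=
      Finset.sum_le_sum (fun i _ => le_max_right _ _)
    rw [← Finset.mul_sum, ← hS] at h1
    have : δ1 * S = δ0 * S + 1 := by
      rw [hδ1]; field_simp
    nlinarith
  obtain ⟨δ, hδmem, hfδ⟩ := intermediate_value_Icc hδ01 hf_cont.continuousOn
    (Set.mem_Icc.mpr ⟨hfδ0, hfδ1⟩)
  have hδpos : 0 < δ := lt_of_lt_of_le hδ0pos hδmem.1
  refine ⟨δ, ⟨hδpos, hfδ⟩, ?_⟩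
  rintro y ⟨hy, hfy⟩
  rcases lt_trichotomy y δ with h | h | h
  · exact absurd hfδ (by have := key y δ hy hfy h; linarith)
  · exact h
  · exact absurd hfy (by have := key δ y hδpos hfδ h; linarith)
end

section
/- Let W be an m×n row-stochastic matrix and r a nonnegative 1×m row vector satisfying W_{ij} ≥ (rW)_j for all i, j (i.e., W ≥ 1_m·rW entrywise). Then r_+ := Σ_i r_i ≤ Σ_{j=1}^n min_{1≤i≤m} W_{ij}. Moreover, if not all rows of W are equal, then Σ_{j=1}^n min_{1≤i≤m} W_{ij} < 1, and hence r_+ < 1. -/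
open Finset

/-- If `W ≥ 1ₘ·rW` entrywise, then `r₊ ≤ ∑_j min_i W_{ij}`; moreover, if not all
rows of `W` are equal then `∑_j min_i W_{ij} < 1`, and hence `r₊ < 1`. -/
theorem rplus_le_sum_min {m n : ℕ} (hm : 0 < m)
    (W : Matrix (Fin m) (Fin n) ℝ)
    (hW0 : ∀ i j, 0 ≤ W i j) (hW1 : ∀ i, ∑ j, W i j = 1)
    (r : Fin m → ℝ) (hr0 : ∀ i, 0 ≤ r i)
    (hrW : ∀ i j, (∑ k, r k * W k j) ≤ W i j) :
    (∑ i, r i) ≤ (∑ j, ⨅ i, W i j) ∧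
    ((∃ i k : Fin m, ∃ j : Fin n, W i j ≠ W k j) →
      (∑ j, ⨅ i, W i j) < 1 ∧ (∑ i, r i) < 1) := by
  haveI : Nonempty (Fin m) := ⟨⟨0, hm⟩⟩
  have hbdd : ∀ j : Fin n, BddBelow (Set.range fun i => W i j) := fun j =>
    (Set.finite_range _).bddBelow
  have hinf_le : ∀ (i : Fin m) (j : Fin n), (⨅ i, W i j) ≤ W i j := fun i j =>
    ciInf_le (hbdd j) i
  have h1 : (∑ i, r i) ≤ (∑ j, ⨅ i, W i j) := by
    have hsum : (∑ j, ∑ k, r k * W k j) = ∑ i, r i := by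
      rw [Finset.sum_comm]
      calc (∑ k, ∑ j, r k * W k j) = ∑ k, r k * ∑ j, W k j := by
            simp [Finset.mul_sum]
        _ = ∑ k, r k := by simp [hW1]
    rw [← hsum]
    apply Finset.sum_le_sum
    intro j _
    exact le_ciInf fun i => hrW i j
  refine ⟨h1, fun ⟨i, k, j, hne⟩ => ?_⟩
  have key : (∑ j, ⨅ i, W i j) < 1 := by
    rcases lt_or_gt_of_ne hne with h | h
    · rw [← hW1 k]
      apply Finset.sum_lt_sum (fun j' _ => hinf_le k j')
      exact ⟨j, Finset.mem_univ j, lt_of_le_of_lt (hinf_le i j) h⟩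
    · rw [← hW1 i]
      apply Finset.sum_lt_sum (fun j' _ => hinf_le i j')
      exact ⟨j, Finset.mem_univ j, lt_of_le_of_lt (hinf_le k j) h⟩
  exact ⟨key, lt_of_le_of_lt h1 key⟩
end

section
/- Let W be an m×n row-stochastic matrix with Σ_{j=1}^n min_{1≤i≤m} W_{ij} < 1, and let r be a nonnegative 1×m row vector with r_+ := Σ_i r_i < 1 satisfying W ≥ 1_m·rW entrywise; set W* := (I_m − 1_m r)·W/(1−r_+). Let f be a nonnegative 1×n vector with f_+ := Σ_j f_j satisfying f_j ≤ (1+f_+)·min_{1≤i≤m} W*_{ij} for every j. Then (1+f_+)/(1−r_+) ≤ 1/(1 − Σ_{j=1}^n min_{1≤i≤m} W_{ij}). -/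
open Finset

/-- Under the constraints (4) and (16) on the squeezing parameters `r` and `f`,
the multiplier `λ = (1+f₊)/(1−r₊)` satisfies the upper bound
`λ ≤ 1/(1 − ∑_j min_i W_{ij})`. -/
theorem lambda_upper_bound {m n : ℕ} (hm : 0 < m)
    (W : Matrix (Fin m) (Fin n) ℝ)
    (hW0 : ∀ i j, 0 ≤ W i j) (hW1 : ∀ i, ∑ j, W i j = 1)
    (hmin : (∑ j, ⨅ i, W i j) < 1)
    (r : Fin m → ℝ) (hr0 : ∀ i, 0 ≤ r i) (hr1 : ∑ i, r i < 1)
    (hrW : ∀ i j, (∑ k, r k * W k j) ≤ W i j)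
    (Wstar : Matrix (Fin m) (Fin n) ℝ)
    (hWstar : Wstar = (1 - ∑ i, r i)⁻¹ •
      ((1 - Matrix.of fun (_ : Fin m) k => r k) * W))
    (f : Fin n → ℝ) (hf0 : ∀ j, 0 ≤ f j)
    (hfW : ∀ j, f j ≤ (1 + ∑ j', f j') * ⨅ i, Wstar i j) :
    (1 + ∑ j, f j) / (1 - ∑ i, r i) ≤ (1 - ∑ j, ⨅ i, W i j)⁻¹ := by
  have hm' : Nonempty (Fin m) := ⟨⟨0, hm⟩⟩
  set rsum := ∑ i, r i with hrsum
  set S := ∑ j, ⨅ i, W i j with hS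
  set Sstar := ∑ j, ⨅ i, Wstar i j with hSstar
  set fsum := ∑ j, f j with hfsum
  have hc : 0 < 1 - rsum := by linarith
  have hSpos : 0 < 1 - S := by linarith
  have hWs : ∀ i j, Wstar i j = (1 - rsum)⁻¹ * (W i j - ∑ k, r k * W k j) := by
    intro i j
    rw [hWstar]
    simp [Matrix.sub_mul, Matrix.one_mul, Matrix.sub_apply, Matrix.mul_apply,
      Matrix.smul_apply, Matrix.of_apply, smul_eq_mul]
  -- sum over j of ∑ k, r k * W k j equals rsum
  have hasum : ∑ j, (∑ k, r k * W k j) = rsum := by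
    rw [Finset.sum_comm]
    simp only [← Finset.mul_sum, hW1, mul_one]
    rfl
  -- per-column bound on the infimum of Wstar
  have hkey : ∀ j, ⨅ i, Wstar i j ≤ (1 - rsum)⁻¹ * ((⨅ i, W i j) - ∑ k, r k * W k j) := by
    intro j
    obtain ⟨i₀, hi₀⟩ := exists_eq_ciInf_of_finite (f := fun i => W i j)
    have h1 : ⨅ i, Wstar i j ≤ Wstar i₀ j :=
      ciInf_le (Finite.bddBelow_range _) i₀
    rw [hWs i₀ j] at h1
    rw [← hi₀]
    exact h1
  have hSstar_le : Sstar ≤ (1 - rsum)⁻¹ * (S - rsum) := by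
    calc Sstar ≤ ∑ j, (1 - rsum)⁻¹ * ((⨅ i, W i j) - ∑ k, r k * W k j) :=
          Finset.sum_le_sum fun j _ => hkey j
      _ = (1 - rsum)⁻¹ * (S - rsum) := by
          rw [← Finset.mul_sum, Finset.sum_sub_distrib, hasum]
  have hfsum_le : fsum ≤ (1 + fsum) * Sstar := by
    calc fsum = ∑ j, f j := rfl
      _ ≤ ∑ j, (1 + fsum) * ⨅ i, Wstar i j := Finset.sum_le_sum fun j _ => hfW j
      _ = (1 + fsum) * Sstar := by rw [← Finset.mul_sum]
  have hf : 0 ≤ fsum := Finset.sum_nonneg fun j _ => hf0 j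
  have hcs : (1 - rsum) * Sstar ≤ S - rsum := by
    have := mul_le_mul_of_nonneg_left hSstar_le hc.le
    rwa [mul_inv_cancel_left₀ (ne_of_gt hc)] at this
  -- goal: (1+fsum)/(1-rsum) ≤ (1-S)⁻¹
  rw [inv_eq_one_div, div_le_div_iff₀ hc hSpos]
  -- (1+fsum)*(1-S) ≤ 1*(1-rsum)
  nlinarith [mul_le_mul_of_nonneg_left hcs (by linarith : (0:ℝ) ≤ 1 + fsum),
    mul_le_mul_of_nonneg_left hfsum_le hc.le]
end
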